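/- arXiv:2103.00357 — 4 statements merged into one kernel-verified Lean document; each statement's English description precedes it below -/
import Mathlib

section
/- Let d be a positive integer, ℓ₀ an integer with 0 ≤ ℓ₀ ≤ d, and for ℓ₀ ≤ ℓ ≤ d+1 let M_ℓ, G_ℓ : [0,∞) → ℝ be continuous functions with M_{d+1} ≡ 0 and G_{d+1} ≡ 0. Suppose that for every ℓ with ℓ₀ ≤ ℓ ≤ d and every t ≥ 0, G_ℓ(t) = M_ℓ(t) + ℓ·∫_0^t e^{−s} G_{ℓ+1}(s) ds. Then for every such ℓ and every t ≥ 0, G_ℓ(t) = M_ℓ(t) + ∑_{r=ℓ+1}^{d} ℓ·C(r−1, ℓ)·∫_0^t (e^{−s} − e^{−t})^{r−ℓ−1} e^{−s} M_r(s) ds. -/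
open Real

noncomputable def Pker (k : ℕ) (f : ℝ → ℝ) (t : ℝ) : ℝ :=
  ∫ u in (0:ℝ)..t, (Real.exp (-u) - Real.exp (-t)) ^ k * Real.exp (-u) * f u

noncomputable def gInt (j : ℕ) (f : ℝ → ℝ) (t : ℝ) : ℝ :=
  ∫ u in (0:ℝ)..t, Real.exp (-((j : ℝ) + 1) * u) * f u

lemma gInt_integrand_cont (j : ℕ) (f : ℝ → ℝ) (hf : Continuous f) :
    Continuous fun u : ℝ => Real.exp (-((j : ℝ) + 1) * u) * f u := by
  fun_prop

lemma hasDerivAt_gInt (j : ℕ) (f : ℝ → ℝ) (hf : Continuous f) (t : ℝ) :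
    HasDerivAt (gInt j f) (Real.exp (-((j : ℝ) + 1) * t) * f t) t := by
  have hc := gInt_integrand_cont j f hf
  exact intervalIntegral.integral_hasDerivAt_right (hc.intervalIntegrable _ _)
    (hc.stronglyMeasurableAtFilter _ _) hc.continuousAt

lemma gInt_continuous (j : ℕ) (f : ℝ → ℝ) (hf : Continuous f) :
    Continuous (gInt j f) :=
  continuous_iff_continuousAt.mpr fun t => (hasDerivAt_gInt j f hf t).continuousAt

lemma Pker_eq_sum (k : ℕ) (f : ℝ → ℝ) (hf : Continuous f) (t : ℝ) :
    Pker k f t = ∑ j ∈ Finset.range (k + 1),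
      ((k.choose j : ℝ) * (-1) ^ (k - j) * Real.exp (-((k - j : ℕ) : ℝ) * t)) * gInt j f t := by
  have expand : ∀ u : ℝ, (Real.exp (-u) - Real.exp (-t)) ^ k * Real.exp (-u) * f u
      = ∑ j ∈ Finset.range (k + 1),
        ((k.choose j : ℝ) * (-1) ^ (k - j) * Real.exp (-((k - j : ℕ) : ℝ) * t))
          * (Real.exp (-((j : ℝ) + 1) * u) * f u) := by
    intro u
    have hb : Real.exp (-u) - Real.exp (-t) = Real.exp (-u) + (-Real.exp (-t)) := by ring
    rw [hb, add_pow, Finset.sum_mul, Finset.sum_mul]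
    refine Finset.sum_congr rfl fun j hj => ?_
    have hj' : j ≤ k := Nat.lt_succ_iff.mp (Finset.mem_range.mp hj)
    have h1 : Real.exp (-u) ^ j * Real.exp (-u) = Real.exp (-((j : ℝ) + 1) * u) := by
      rw [← Real.exp_nat_mul, ← Real.exp_add]
      ring_nf
    have h2 : (-Real.exp (-t)) ^ (k - j) = (-1) ^ (k - j) * Real.exp (-((k - j : ℕ) : ℝ) * t) := by
      rw [neg_pow, ← Real.exp_nat_mul]
      ring_nf
    calc Real.exp (-u) ^ j * (-Real.exp (-t)) ^ (k - j) * (k.choose j : ℝ) * Real.exp (-u) * f u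
        = (k.choose j : ℝ) * (-Real.exp (-t)) ^ (k - j) * (Real.exp (-u) ^ j * Real.exp (-u)) * f u := by ring
      _ = _ := by rw [h1, h2]; ring
  unfold Pker
  rw [intervalIntegral.integral_congr (g := fun u => ∑ j ∈ Finset.range (k + 1),
      ((k.choose j : ℝ) * (-1) ^ (k - j) * Real.exp (-((k - j : ℕ) : ℝ) * t))
        * (Real.exp (-((j : ℝ) + 1) * u) * f u)) (fun u _ => expand u)]
  rw [intervalIntegral.integral_finset_sum]
  · refine Finset.sum_congr rfl fun j hj => ?_
    rw [intervalIntegral.integral_const_mul]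
    rfl
  · intro j hj
    exact (Continuous.intervalIntegrable (by fun_prop) _ _)

lemma Pker_continuous (k : ℕ) (f : ℝ → ℝ) (hf : Continuous f) :
    Continuous (Pker k f) := by
  have : Pker k f = fun t => ∑ j ∈ Finset.range (k + 1),
      ((k.choose j : ℝ) * (-1) ^ (k - j) * Real.exp (-((k - j : ℕ) : ℝ) * t)) * gInt j f t :=
    funext (Pker_eq_sum k f hf)
  rw [this]
  exact continuous_finset_sum _ fun j _ => by
    have := gInt_continuous j f hf
    fun_prop

lemma alt_sum_zero (n : ℕ) (hn : n ≠ 0) :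
    ∑ j ∈ Finset.range (n + 1), (-1 : ℝ) ^ (n - j) * (n.choose j : ℝ) = 0 := by
  have hz : ∑ j ∈ Finset.range (n + 1), (-1 : ℝ) ^ j * (n.choose j : ℝ) = 0 := by
    have h := Int.alternating_sum_range_choose_of_ne hn
    exact_mod_cast congrArg (fun z : ℤ => (z : ℝ)) h
  have h : ∀ j ∈ Finset.range (n + 1),
      (-1 : ℝ) ^ (n - j) * (n.choose j : ℝ) = (-1) ^ n * ((-1) ^ j * (n.choose j : ℝ)) := by
    intro j hj
    have hj' : j ≤ n := Nat.lt_succ_iff.mp (Finset.mem_range.mp hj)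
    have h2 : (-1 : ℝ) ^ n * (-1) ^ j = (-1) ^ (n - j) := by
      rw [← pow_add, show n + j = (n - j) + 2 * j by omega, pow_add, pow_mul]
      norm_num
    rw [← mul_assoc, h2]
  rw [Finset.sum_congr rfl h, ← Finset.mul_sum, hz, mul_zero]

lemma hasDerivAt_exp_neg_mul (c x : ℝ) :
    HasDerivAt (fun t => Real.exp (-c * t)) (-c * Real.exp (-c * x)) x := by
  simpa [mul_comm] using ((hasDerivAt_id x).const_mul (-c)).exp

lemma Pker_succ (k : ℕ) (f : ℝ → ℝ) (hf : Continuous f) (t : ℝ) :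
    Pker (k + 1) f t = ((k : ℝ) + 1) * ∫ s in (0:ℝ)..t, Real.exp (-s) * Pker k f s := by
  have hPc : Continuous fun s => Real.exp (-s) * Pker k f s := by
    have := Pker_continuous k f hf; fun_prop
  have hR : ∀ x : ℝ, HasDerivAt (fun t => ((k : ℝ) + 1) * ∫ s in (0:ℝ)..t, Real.exp (-s) * Pker k f s)
      (((k : ℝ) + 1) * (Real.exp (-x) * Pker k f x)) x := by
    intro x
    exact (intervalIntegral.integral_hasDerivAt_right (hPc.intervalIntegrable _ _)
      (hPc.stronglyMeasurableAtFilter _ _) hPc.continuousAt).const_mul _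
  have hL : ∀ x : ℝ, HasDerivAt (Pker (k + 1) f)
      (((k : ℝ) + 1) * (Real.exp (-x) * Pker k f x)) x := by
    intro x
    have hfun : Pker (k + 1) f = fun t => ∑ j ∈ Finset.range (k + 2),
        (((k + 1).choose j : ℝ) * (-1) ^ (k + 1 - j)) *
          (Real.exp (-((k + 1 - j : ℕ) : ℝ) * t) * gInt j f t) := by
      funext t
      rw [Pker_eq_sum (k + 1) f hf t]
      exact Finset.sum_congr rfl fun j _ => by ring
    rw [hfun]
    have hterm : ∀ j ∈ Finset.range (k + 2), HasDerivAt
        (fun t => (((k + 1).choose j : ℝ) * (-1) ^ (k + 1 - j)) *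
          (Real.exp (-((k + 1 - j : ℕ) : ℝ) * t) * gInt j f t))
        ((((k + 1).choose j : ℝ) * (-1) ^ (k + 1 - j)) *
          ((-((k + 1 - j : ℕ) : ℝ)) * Real.exp (-((k + 1 - j : ℕ) : ℝ) * x) * gInt j f x
            + Real.exp (-((k + 1 - j : ℕ) : ℝ) * x) * (Real.exp (-((j : ℝ) + 1) * x) * f x))) x :=
      fun j _ => ((hasDerivAt_exp_neg_mul _ x).mul (hasDerivAt_gInt j f hf x)).const_mul _
    have hsum := HasDerivAt.fun_sum hterm
    refine hsum.congr_deriv (Eq.symm ?_)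
    -- algebra: (k+1) * (exp(-x) * Pker k f x) = ∑ ...
    have hsplit : ∀ j ∈ Finset.range (k + 2),
        (((k + 1).choose j : ℝ) * (-1) ^ (k + 1 - j)) *
          ((-((k + 1 - j : ℕ) : ℝ)) * Real.exp (-((k + 1 - j : ℕ) : ℝ) * x) * gInt j f x
            + Real.exp (-((k + 1 - j : ℕ) : ℝ) * x) * (Real.exp (-((j : ℝ) + 1) * x) * f x))
        = (((k + 1).choose j : ℝ) * (-1) ^ (k + 1 - j) * (-((k + 1 - j : ℕ) : ℝ))
            * Real.exp (-((k + 1 - j : ℕ) : ℝ) * x) * gInt j f x)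
          + ((-1) ^ (k + 1 - j) * ((k + 1).choose j : ℝ)) * (Real.exp (-((k : ℝ) + 2) * x) * f x) := by
      intro j hj
      have hj' : j ≤ k + 1 := Nat.lt_succ_iff.mp (Finset.mem_range.mp hj)
      have hexp : Real.exp (-((k + 1 - j : ℕ) : ℝ) * x) * Real.exp (-((j : ℝ) + 1) * x)
          = Real.exp (-((k : ℝ) + 2) * x) := by
        rw [← Real.exp_add]
        congr 1
        have : ((k + 1 - j : ℕ) : ℝ) = (k : ℝ) + 1 - (j : ℝ) := by
          push_cast [Nat.cast_sub hj']; ring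
        rw [this]; ring
      calc _ = (((k + 1).choose j : ℝ) * (-1) ^ (k + 1 - j) * (-((k + 1 - j : ℕ) : ℝ))
            * Real.exp (-((k + 1 - j : ℕ) : ℝ) * x) * gInt j f x)
          + ((-1) ^ (k + 1 - j) * ((k + 1).choose j : ℝ)) *
            ((Real.exp (-((k + 1 - j : ℕ) : ℝ) * x) * Real.exp (-((j : ℝ) + 1) * x)) * f x) := by
            ring
        _ = _ := by rw [hexp]
    rw [Finset.sum_congr rfl hsplit, Finset.sum_add_distrib]
    have hB : ∑ j ∈ Finset.range (k + 2),
        ((-1 : ℝ) ^ (k + 1 - j) * ((k + 1).choose j : ℝ)) * (Real.exp (-((k : ℝ) + 2) * x) * f x)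
        = 0 := by
      rw [← Finset.sum_mul, alt_sum_zero (k + 1) (Nat.succ_ne_zero k), zero_mul]
    rw [hB, add_zero]
    rw [Finset.sum_range_succ]
    have hlast : (((k + 1).choose (k + 1) : ℝ) * (-1) ^ (k + 1 - (k + 1)) * (-((k + 1 - (k + 1) : ℕ) : ℝ))
        * Real.exp (-((k + 1 - (k + 1) : ℕ) : ℝ) * x) * gInt (k + 1) f x) = 0 := by
      simp
    rw [hlast, add_zero]
    rw [Pker_eq_sum k f hf x, Finset.mul_sum, Finset.mul_sum]
    refine Finset.sum_congr rfl fun j hj => ?_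
    have hj' : j ≤ k := Nat.lt_succ_iff.mp (Finset.mem_range.mp hj)
    have e1 : k + 1 - j = (k - j) + 1 := by omega
    have hchooseN : (k + 1).choose j * (k + 1 - j) = (k + 1) * k.choose j := by
      rw [← Nat.choose_mul_succ_eq k j]; ring
    have hchooseR : ((k + 1).choose j : ℝ) * ((k + 1 - j : ℕ) : ℝ) = ((k : ℝ) + 1) * (k.choose j : ℝ) := by
      exact_mod_cast congrArg (fun n : ℕ => (n : ℝ)) hchooseN
    have hsign : (-1 : ℝ) ^ (k + 1 - j) = -(-1 : ℝ) ^ (k - j) := by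
      rw [e1, pow_succ]; ring
    have hexp2 : Real.exp (-((k + 1 - j : ℕ) : ℝ) * x)
        = Real.exp (-((k - j : ℕ) : ℝ) * x) * Real.exp (-x) := by
      rw [← Real.exp_add]
      congr 1
      rw [e1]; push_cast; ring
    rw [hsign, hexp2]
    linear_combination (-(-1 : ℝ) ^ (k - j) * Real.exp (-((k - j : ℕ) : ℝ) * x) * Real.exp (-x)
      * gInt j f x) * hchooseR
  -- difference has zero derivative, hence constant
  have hsub : ∀ x : ℝ, HasDerivAt
      (fun t => Pker (k + 1) f t - ((k : ℝ) + 1) * ∫ s in (0:ℝ)..t, Real.exp (-s) * Pker k f s)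
      0 x := fun x => by simpa using (hL x).fun_sub (hR x)
  have hconst := is_const_of_deriv_eq_zero
    (fun x => (hsub x).differentiableAt) (fun x => (hsub x).deriv) t 0
  have h0 : Pker (k + 1) f 0 = 0 := by simp [Pker]
  simp only [intervalIntegral.integral_same, mul_zero, sub_zero, h0, zero_sub] at hconst
  linarith [hconst]

/-- **Resolution of the integral recursion** (equation (3.17) of the paper). Let `d ≥ 1`,
`0 ≤ ℓ₀ ≤ d`, and for `ℓ₀ ≤ ℓ ≤ d + 1` let `M_ℓ, G_ℓ : [0,∞) → ℝ` be continuous with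
`M_{d+1} ≡ 0 ≡ G_{d+1}`. If `G_ℓ(t) = M_ℓ(t) + ℓ ∫_0^t e^{−s} G_{ℓ+1}(s) ds` for all
`ℓ₀ ≤ ℓ ≤ d` and `t ≥ 0`, then
`G_ℓ(t) = M_ℓ(t) + ∑_{r=ℓ+1}^d ℓ C(r−1,ℓ) ∫_0^t (e^{−s} − e^{−t})^{r−ℓ−1} e^{−s} M_r(s) ds`. -/
theorem integral_recursion_resolution
    (d : ℕ) (hd : 1 ≤ d) (ℓ₀ : ℕ) (hℓ₀ : ℓ₀ ≤ d)
    (M G : ℕ → ℝ → ℝ)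
    (hMcont : ∀ ℓ, ℓ₀ ≤ ℓ → ℓ ≤ d + 1 → ContinuousOn (M ℓ) (Set.Ici 0))
    (hGcont : ∀ ℓ, ℓ₀ ≤ ℓ → ℓ ≤ d + 1 → ContinuousOn (G ℓ) (Set.Ici 0))
    (hMtop : ∀ t : ℝ, 0 ≤ t → M (d + 1) t = 0)
    (hGtop : ∀ t : ℝ, 0 ≤ t → G (d + 1) t = 0)
    (hrec : ∀ ℓ, ℓ₀ ≤ ℓ → ℓ ≤ d → ∀ t : ℝ, 0 ≤ t →
      G ℓ t = M ℓ t + (ℓ : ℝ) * ∫ s in (0:ℝ)..t, Real.exp (-s) * G (ℓ + 1) s) :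
    ∀ ℓ, ℓ₀ ≤ ℓ → ℓ ≤ d → ∀ t : ℝ, 0 ≤ t →
      G ℓ t = M ℓ t + ∑ r ∈ Finset.Icc (ℓ + 1) d, (ℓ : ℝ) * ((r - 1).choose ℓ : ℝ) *
        ∫ s in (0:ℝ)..t,
          (Real.exp (-s) - Real.exp (-t)) ^ (r - ℓ - 1) * Real.exp (-s) * M r s := by
  intro ℓ hℓ hℓd t ht
  set f : ℕ → ℝ → ℝ := fun r u => M r (max u 0) with hfdef
  have hfc : ∀ r, ℓ₀ ≤ r → r ≤ d + 1 → Continuous (f r) := by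
    intro r h1 h2
    exact (hMcont r h1 h2).comp_continuous (continuous_id.max continuous_const)
      fun x => Set.mem_Ici.mpr (le_max_right _ _)
  have hfeqM : ∀ r (u : ℝ), 0 ≤ u → f r u = M r u := by
    intro r u hu; simp [hfdef, max_eq_left hu]
  have hPM : ∀ r k (t' : ℝ), 0 ≤ t' → Pker k (f r) t' =
      ∫ s in (0:ℝ)..t', (Real.exp (-s) - Real.exp (-t')) ^ k * Real.exp (-s) * M r s := by
    intro r k t' ht'
    apply intervalIntegral.integral_congr
    intro u hu
    rw [Set.uIcc_of_le ht'] at hu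
    simp only [hfeqM r u hu.1]
  have hbase : ∀ t' : ℝ, 0 ≤ t' → G d t' = M d t' := by
    intro t' ht'
    rw [hrec d hℓ₀ le_rfl t' ht']
    have hz : (∫ s in (0:ℝ)..t', Real.exp (-s) * G (d + 1) s) = 0 := by
      rw [intervalIntegral.integral_congr (g := fun _ => (0:ℝ)) ?_]
      · simp
      · intro s hs
        rw [Set.uIcc_of_le ht'] at hs
        simp [hGtop s hs.1]
    rw [hz]; ring
  have claim : ∀ n : ℕ, ∀ ℓ, ℓ₀ ≤ ℓ → ℓ ≤ d → d - ℓ ≤ n → ∀ t' : ℝ, 0 ≤ t' →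
      G ℓ t' = M ℓ t' + ∑ r ∈ Finset.Icc (ℓ + 1) d,
        (ℓ : ℝ) * ((r - 1).choose ℓ : ℝ) * Pker (r - ℓ - 1) (f r) t' := by
    intro n
    induction n with
    | zero =>
      intro ℓ h0 hd' hle t' ht'
      have hdl : ℓ = d := by omega
      subst hdl
      rw [Finset.Icc_eq_empty (by omega), Finset.sum_empty, add_zero]
      exact hbase t' ht'
    | succ n ih =>
      intro ℓ h0 hd' hle t' ht'
      rcases eq_or_lt_of_le hd' with he | hlt
      · subst he
        rw [Finset.Icc_eq_empty (by omega), Finset.sum_empty, add_zero]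
        exact hbase t' ht'
      · have hIH := ih (ℓ + 1) (by omega) (by omega) (by omega)
        have hcontterm : ∀ r ∈ Finset.Icc (ℓ + 1 + 1) d, Continuous
            (fun s : ℝ => (((ℓ + 1 : ℕ) : ℝ) * ((r - 1).choose (ℓ + 1) : ℝ)) *
              (Real.exp (-s) * Pker (r - (ℓ + 1) - 1) (f r) s)) := by
          intro r hr
          rw [Finset.mem_Icc] at hr
          have := Pker_continuous (r - (ℓ + 1) - 1) (f r) (hfc r (by omega) (by omega))
          fun_prop
        have hc1 : Continuous fun s : ℝ => Real.exp (-s) * f (ℓ + 1) s := by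
          have := hfc (ℓ + 1) (by omega) (by omega); fun_prop
        have hstep : (∫ s in (0:ℝ)..t', Real.exp (-s) * G (ℓ + 1) s)
            = (∫ s in (0:ℝ)..t', Real.exp (-s) * f (ℓ + 1) s)
              + ∑ r ∈ Finset.Icc (ℓ + 1 + 1) d, (((ℓ + 1 : ℕ) : ℝ) * ((r - 1).choose (ℓ + 1) : ℝ)) *
                  ∫ s in (0:ℝ)..t', Real.exp (-s) * Pker (r - (ℓ + 1) - 1) (f r) s := by
          have hcongr : ∀ s ∈ Set.uIcc (0:ℝ) t', Real.exp (-s) * G (ℓ + 1) s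
              = Real.exp (-s) * f (ℓ + 1) s
                + ∑ r ∈ Finset.Icc (ℓ + 1 + 1) d,
                    (((ℓ + 1 : ℕ) : ℝ) * ((r - 1).choose (ℓ + 1) : ℝ)) *
                      (Real.exp (-s) * Pker (r - (ℓ + 1) - 1) (f r) s) := by
            intro s hs
            rw [Set.uIcc_of_le ht'] at hs
            have hs0 : 0 ≤ s := hs.1
            rw [hIH s hs0, ← hfeqM (ℓ + 1) s hs0, mul_add, Finset.mul_sum]
            congr 1
            exact Finset.sum_congr rfl fun r _ => by ring
          rw [intervalIntegral.integral_congr hcongr]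
          rw [intervalIntegral.integral_add (hc1.intervalIntegrable _ _)
            ((continuous_finset_sum _ hcontterm).intervalIntegrable _ _)]
          congr 1
          rw [intervalIntegral.integral_finset_sum
            (fun r hr => ((hcontterm r hr).intervalIntegrable _ _))]
          exact Finset.sum_congr rfl fun r hr => intervalIntegral.integral_const_mul _ _
        rw [hrec ℓ h0 (le_of_lt hlt) t' ht', hstep]
        have hins : Finset.Icc (ℓ + 1) d = insert (ℓ + 1) (Finset.Icc (ℓ + 1 + 1) d) := by
          ext r; simp only [Finset.mem_Icc, Finset.mem_insert]; omega
        rw [hins, Finset.sum_insert (by simp [Finset.mem_Icc])]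
        have hA : (∫ s in (0:ℝ)..t', Real.exp (-s) * f (ℓ + 1) s) = Pker 0 (f (ℓ + 1)) t' := by
          simp [Pker]
        rw [hA, mul_add, Finset.mul_sum, add_assoc]
        congr 1
        congr 1
        · have h1 : ℓ + 1 - 1 = ℓ := by omega
          have h2 : ℓ + 1 - ℓ - 1 = 0 := by omega
          rw [h1, h2, Nat.choose_self]
          norm_num
        · refine Finset.sum_congr rfl fun r hr => ?_
          rw [Finset.mem_Icc] at hr
          set k := r - (ℓ + 1) - 1 with hk
          have hk1 : k + 1 = r - ℓ - 1 := by omega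
          have hps := Pker_succ k (f r) (hfc r (by omega) (by omega)) t'
          rw [hk1] at hps
          rw [hps]
          have hnat : (ℓ + 1) * ((r - 1).choose (ℓ + 1)) = (r - 1).choose ℓ * (k + 1) := by
            rw [mul_comm, Nat.choose_succ_right_eq]
            congr 1
            omega
          have hc : ((ℓ + 1 : ℕ) : ℝ) * ((r - 1).choose (ℓ + 1) : ℝ)
              = ((r - 1).choose ℓ : ℝ) * ((k : ℝ) + 1) := by
            exact_mod_cast congrArg (fun m : ℕ => (m : ℝ)) hnat
          linear_combination ((ℓ : ℝ) * (∫ s in (0:ℝ)..t', Real.exp (-s) * Pker k (f r) s)) * hc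
  have hfin := claim (d - ℓ) ℓ hℓ hℓd le_rfl t ht
  rw [hfin]
  congr 1
  exact Finset.sum_congr rfl fun r hr => by rw [hPM r _ t ht]
end

section
/- For all integers 0 ≤ ℓ ≤ d and every t ≥ 0, e^{ℓt}·β(d, e^{−t}, ℓ) = 1 + ℓ·∫_0^t e^{ℓs}·β(d, e^{−s}, ℓ+1) ds, where β(d, z, d+1) := 0. -/
open Real

/-- The point mass `b(d,z,ℓ) = C(d,ℓ) z^ℓ (1−z)^{d−ℓ}` of the `Binomial(d,z)` distribution. -/
noncomputable def binomPMF (d ℓ : ℕ) (z : ℝ) : ℝ :=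
  (d.choose ℓ : ℝ) * z ^ ℓ * (1 - z) ^ (d - ℓ)

/-- The upper tail `β(d,z,ℓ) = ∑_{r=ℓ}^d C(d,r) z^r (1−z)^{d−r}` of `Binomial(d,z)`;
note `binomTail d (d+1) z = 0` since the index set is empty. -/
noncomputable def binomTail (d ℓ : ℕ) (z : ℝ) : ℝ :=
  ∑ r ∈ Finset.Icc ℓ d, binomPMF d r z

lemma tele (a : ℕ → ℝ) (ℓ : ℕ) : ∀ N : ℕ,
    ∑ i ∈ Finset.range N, (a (ℓ + i + 1) - a (ℓ + i)) = a (ℓ + N) - a ℓ := by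
  intro N
  induction N with
  | zero => simp
  | succ n ih => rw [Finset.sum_range_succ, ih]; ring_nf

lemma alg (d ℓ : ℕ) (hℓd : ℓ ≤ d) (z : ℝ) :
    ∑ r ∈ Finset.Icc ℓ d,
        ((d.choose r : ℝ) * ((((ℓ:ℝ) - (r:ℝ)) * z ^ r * (1 - z) ^ (d - r))
          + ((d - r : ℕ) : ℝ) * z ^ r * z * (1 - z) ^ (d - r - 1)))
      = (ℓ : ℝ) * ∑ r ∈ Finset.Icc (ℓ + 1) d, binomPMF d r z := by
  set a : ℕ → ℝ := fun r => ((r:ℝ) - (ℓ:ℝ)) * (d.choose r : ℝ) * z ^ r * (1 - z) ^ (d - r) with ha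
  have key : ∀ r ∈ Finset.Icc ℓ d,
      (d.choose r : ℝ) * ((((ℓ:ℝ) - (r:ℝ)) * z ^ r * (1 - z) ^ (d - r))
          + ((d - r : ℕ) : ℝ) * z ^ r * z * (1 - z) ^ (d - r - 1))
        = (a (r+1) - a r) + (ℓ:ℝ) * binomPMF d (r+1) z := by
    intro r hr
    simp only [Finset.mem_Icc] at hr
    have hc : ((d - r : ℕ):ℝ) * (d.choose r : ℝ) = ((r:ℝ)+1) * (d.choose (r+1) : ℝ) := by
      have : (d - r) * d.choose r = (r + 1) * d.choose (r+1) := by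
        rw [mul_comm (d - r), ← Nat.choose_succ_right_eq, mul_comm]
      exact_mod_cast this
    rcases eq_or_lt_of_le hr.2 with h | h
    · subst h
      simp [ha, binomPMF, Nat.choose_succ_self]
      ring
    · obtain ⟨m, hm⟩ : ∃ m, d - r = m + 1 := ⟨d - r - 1, by omega⟩
      have h2 : d - (r+1) = m := by omega
      have h3 : d - r - 1 = m := by omega
      rw [hm] at hc
      simp only [ha, binomPMF, h2, h3, hm]
      rw [pow_succ]
      push_cast at hc ⊢
      linear_combination (z ^ r * z * (1 - z) ^ m) * hc
  rw [Finset.sum_congr rfl key, Finset.sum_add_distrib, ← Finset.mul_sum]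
  have htel : ∑ r ∈ Finset.Icc ℓ d, (a (r+1) - a r) = 0 := by
    rw [← Finset.Ico_add_one_right_eq_Icc, Finset.sum_Ico_eq_sum_range]
    rw [tele a ℓ (d + 1 - ℓ)]
    have h1 : ℓ + (d + 1 - ℓ) = d + 1 := by omega
    rw [h1]
    have h2 : a (d+1) = 0 := by simp [ha, Nat.choose_succ_self]
    have h3 : a ℓ = 0 := by simp [ha]
    rw [h2, h3]; ring
  have hshift : ∑ r ∈ Finset.Icc ℓ d, binomPMF d (r+1) z
      = ∑ r ∈ Finset.Icc (ℓ+1) d, binomPMF d r z := by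
    rw [← Finset.Ico_add_one_right_eq_Icc, ← Finset.Ico_add_one_right_eq_Icc,
      Finset.sum_Ico_eq_sum_range, Finset.sum_Ico_eq_sum_range]
    have h2 : d + 1 - ℓ = (d + 1 - (ℓ + 1)) + 1 := by omega
    rw [h2, Finset.sum_range_succ]
    have h3 : binomPMF d (ℓ + (d + 1 - (ℓ + 1)) + 1) z = 0 := by
      rw [show ℓ + (d + 1 - (ℓ + 1)) + 1 = d + 1 by omega]
      simp [binomPMF, Nat.choose_succ_self]
    rw [h3, add_zero]
    refine Finset.sum_congr rfl fun i _ => ?_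
    congr 1
    omega
  rw [htel, hshift]; ring

lemma hasDeriv (d ℓ : ℕ) (hℓd : ℓ ≤ d) (s : ℝ) :
    HasDerivAt (fun s : ℝ => Real.exp (ℓ * s) * binomTail d ℓ (Real.exp (-s)))
      ((ℓ:ℝ) * (Real.exp (ℓ * s) * binomTail d (ℓ+1) (Real.exp (-s)))) s := by
  have hF : (fun s : ℝ => Real.exp (ℓ * s) * binomTail d ℓ (Real.exp (-s)))
      = fun s : ℝ => ∑ r ∈ Finset.Icc ℓ d,
          (d.choose r : ℝ) * (Real.exp (((ℓ:ℝ) - (r:ℝ)) * s) * (1 - Real.exp (-s)) ^ (d - r)) := by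
    funext s
    unfold binomTail binomPMF
    rw [Finset.mul_sum]
    refine Finset.sum_congr rfl fun r _ => ?_
    have he : Real.exp (((ℓ:ℝ) - (r:ℝ)) * s) = Real.exp ((ℓ:ℝ) * s) * Real.exp (-s) ^ r := by
      rw [← Real.exp_nat_mul, ← Real.exp_add]
      congr 1; ring
    rw [he]; ring
  rw [hF]
  have hsum : HasDerivAt
      (fun s : ℝ => ∑ r ∈ Finset.Icc ℓ d,
        (d.choose r : ℝ) * (Real.exp (((ℓ:ℝ) - (r:ℝ)) * s) * (1 - Real.exp (-s)) ^ (d - r)))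
      (∑ r ∈ Finset.Icc ℓ d,
        (d.choose r : ℝ) * ((Real.exp (((ℓ:ℝ) - (r:ℝ)) * s) * ((ℓ:ℝ) - (r:ℝ))) * (1 - Real.exp (-s)) ^ (d - r)
          + Real.exp (((ℓ:ℝ) - (r:ℝ)) * s) * (((d - r : ℕ):ℝ) * (1 - Real.exp (-s)) ^ (d - r - 1) * Real.exp (-s)))) s := by
    refine HasDerivAt.fun_sum fun r _ => ?_
    have hc : HasDerivAt (fun s : ℝ => ((ℓ:ℝ) - (r:ℝ)) * s) ((ℓ:ℝ) - (r:ℝ)) s := by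
      simpa using (hasDerivAt_id s).const_mul ((ℓ:ℝ) - (r:ℝ))
    have h1 := hc.exp
    have hw : HasDerivAt (fun s : ℝ => 1 - Real.exp (-s)) (Real.exp (-s)) s := by
      simpa using ((hasDerivAt_id s).neg.exp).const_sub 1
    have h2 := hw.pow (d - r)
    exact (h1.mul h2).const_mul (d.choose r : ℝ)
  have hval : (∑ r ∈ Finset.Icc ℓ d,
        (d.choose r : ℝ) * ((Real.exp (((ℓ:ℝ) - (r:ℝ)) * s) * ((ℓ:ℝ) - (r:ℝ))) * (1 - Real.exp (-s)) ^ (d - r)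
          + Real.exp (((ℓ:ℝ) - (r:ℝ)) * s) * (((d - r : ℕ):ℝ) * (1 - Real.exp (-s)) ^ (d - r - 1) * Real.exp (-s))))
      = (ℓ:ℝ) * (Real.exp (ℓ * s) * binomTail d (ℓ+1) (Real.exp (-s))) := by
    have h1 : ∀ r ∈ Finset.Icc ℓ d,
        (d.choose r : ℝ) * ((Real.exp (((ℓ:ℝ) - (r:ℝ)) * s) * ((ℓ:ℝ) - (r:ℝ))) * (1 - Real.exp (-s)) ^ (d - r)
          + Real.exp (((ℓ:ℝ) - (r:ℝ)) * s) * (((d - r : ℕ):ℝ) * (1 - Real.exp (-s)) ^ (d - r - 1) * Real.exp (-s)))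
        = Real.exp ((ℓ:ℝ) * s) * ((d.choose r : ℝ) * ((((ℓ:ℝ) - (r:ℝ)) * Real.exp (-s) ^ r * (1 - Real.exp (-s)) ^ (d - r))
          + ((d - r : ℕ) : ℝ) * Real.exp (-s) ^ r * Real.exp (-s) * (1 - Real.exp (-s)) ^ (d - r - 1))) := by
      intro r _
      have he : Real.exp (((ℓ:ℝ) - (r:ℝ)) * s) = Real.exp ((ℓ:ℝ) * s) * Real.exp (-s) ^ r := by
        rw [← Real.exp_nat_mul, ← Real.exp_add]
        congr 1; ring
      rw [he]; ring
    rw [Finset.sum_congr rfl h1, ← Finset.mul_sum, alg d ℓ hℓd (Real.exp (-s))]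
    unfold binomTail
    ring
  rw [← hval]
  exact hsum


/-- Equation (3.18) of the paper: for all `0 ≤ ℓ ≤ d` and `t ≥ 0`,
`e^{ℓt} β(d, e^{−t}, ℓ) = 1 + ℓ ∫_0^t e^{ℓs} β(d, e^{−s}, ℓ+1) ds`,
where `β(d, z, d+1) := 0`. -/
theorem binomTail_integral_identity (d ℓ : ℕ) (hℓd : ℓ ≤ d) (t : ℝ) (ht : 0 ≤ t) :
    Real.exp (ℓ * t) * binomTail d ℓ (Real.exp (-t))
      = 1 + (ℓ : ℝ) * ∫ s in (0:ℝ)..t,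
          Real.exp (ℓ * s) * binomTail d (ℓ + 1) (Real.exp (-s)) := by
  have hcont : Continuous fun s : ℝ => Real.exp (ℓ * s) * binomTail d (ℓ+1) (Real.exp (-s)) := by
    unfold binomTail binomPMF
    fun_prop
  have hFTC := intervalIntegral.integral_eq_sub_of_hasDerivAt
    (f := fun s : ℝ => Real.exp (ℓ * s) * binomTail d ℓ (Real.exp (-s)))
    (f' := fun s : ℝ => (ℓ:ℝ) * (Real.exp (ℓ * s) * binomTail d (ℓ+1) (Real.exp (-s))))
    (fun s _ => hasDeriv d ℓ hℓd s)
    ((continuous_const.mul hcont).intervalIntegrable 0 t)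
  rw [intervalIntegral.integral_const_mul] at hFTC
  beta_reduce at hFTC
  have hF0 : Real.exp ((ℓ:ℝ) * 0) * binomTail d ℓ (Real.exp (-0)) = 1 := by
    rw [mul_zero, neg_zero, Real.exp_zero, one_mul]
    unfold binomTail binomPMF
    rw [Finset.sum_eq_single_of_mem d (Finset.mem_Icc.mpr ⟨hℓd, le_refl d⟩)]
    · simp
    · intro r hr hne
      simp only [Finset.mem_Icc] at hr
      have : (1 : ℝ) - 1 = 0 := by ring
      rw [this, zero_pow (by omega : d - r ≠ 0)]
      ring
  rw [hF0] at hFTC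
  linarith
end

section
/- Let p : ℕ×ℕ → [0,1] satisfy ∑_{d,θ} p(d,θ) = 1 and λ := ∑_{d,θ} d·p(d,θ) ∈ (0,∞), define h_B(z) := ∑_{d=1}^∞ ∑_{θ=1}^{d} p(d,θ) ∑_{ℓ=d−θ}^{d} ℓ·b(d,z,ℓ) for z ∈ [0,1], and set ẑ := sup{z ∈ [0,1] : λz² = h_B(z)}. If λ ≠ h_B(1), then ẑ < 1 and λz² > h_B(z) for every z ∈ (ẑ, 1]. -/
open Real

/-- `h_B(z) = ∑_{d=1}^∞ ∑_{θ=1}^d p(d,θ) ∑_{ℓ=d−θ}^d ℓ b(d,z,ℓ)` (Section 3.2 of the paper). -/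
noncomputable def hB (p : ℕ × ℕ → ℝ) (z : ℝ) : ℝ :=
  ∑' d : ℕ, ∑ θ ∈ Finset.Icc 1 d, p (d, θ) *
    ∑ ℓ ∈ Finset.Icc (d - θ) d, (ℓ : ℝ) * binomPMF d ℓ z

lemma binomPMF_nonneg {d ℓ : ℕ} {z : ℝ} (h0 : 0 ≤ z) (h1 : z ≤ 1) :
    0 ≤ binomPMF d ℓ z := by
  unfold binomPMF
  have : (0:ℝ) ≤ 1 - z := by linarith
  positivity

lemma sum_binomPMF (d : ℕ) (z : ℝ) :
    ∑ ℓ ∈ Finset.range (d + 1), binomPMF d ℓ z = 1 := by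
  have h := add_pow z (1 - z) d
  simp only [add_sub_cancel, one_pow] at h
  calc ∑ ℓ ∈ Finset.range (d + 1), binomPMF d ℓ z
      = ∑ m ∈ Finset.range (d + 1), z ^ m * (1 - z) ^ (d - m) * (d.choose m : ℝ) := by
        apply Finset.sum_congr rfl; intro x _; unfold binomPMF; ring
    _ = 1 := h.symm

lemma inner_nonneg (d θ : ℕ) {z : ℝ} (h0 : 0 ≤ z) (h1 : z ≤ 1) :
    0 ≤ ∑ ℓ ∈ Finset.Icc (d - θ) d, (ℓ : ℝ) * binomPMF d ℓ z := by
  apply Finset.sum_nonneg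
  intro ℓ _
  exact mul_nonneg (Nat.cast_nonneg ℓ) (binomPMF_nonneg h0 h1)

lemma inner_le (d θ : ℕ) {z : ℝ} (h0 : 0 ≤ z) (h1 : z ≤ 1) :
    ∑ ℓ ∈ Finset.Icc (d - θ) d, (ℓ : ℝ) * binomPMF d ℓ z ≤ d := by
  calc ∑ ℓ ∈ Finset.Icc (d - θ) d, (ℓ : ℝ) * binomPMF d ℓ z
      ≤ ∑ ℓ ∈ Finset.Icc (d - θ) d, (d : ℝ) * binomPMF d ℓ z := by
        apply Finset.sum_le_sum
        intro ℓ hℓ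
        have : ℓ ≤ d := (Finset.mem_Icc.mp hℓ).2
        exact mul_le_mul_of_nonneg_right (by exact_mod_cast this) (binomPMF_nonneg h0 h1)
    _ ≤ ∑ ℓ ∈ Finset.range (d + 1), (d : ℝ) * binomPMF d ℓ z := by
        apply Finset.sum_le_sum_of_subset_of_nonneg
        · intro x hx
          simp only [Finset.mem_Icc] at hx
          simp [Finset.mem_range, Nat.lt_succ_iff, hx.2]
        · intro i _ _
          exact mul_nonneg (Nat.cast_nonneg d) (binomPMF_nonneg h0 h1)
    _ = d := by rw [← Finset.mul_sum, sum_binomPMF, mul_one]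

lemma binomPMF_one (d ℓ : ℕ) (h : ℓ ≤ d) :
    binomPMF d ℓ 1 = if ℓ = d then 1 else 0 := by
  unfold binomPMF
  rcases eq_or_lt_of_le h with rfl | h'
  · simp
  · rw [if_neg h'.ne]
    have : d - ℓ ≠ 0 := Nat.sub_ne_zero_of_lt h'
    simp [this, zero_pow this]

lemma inner_one (d θ : ℕ) :
    ∑ ℓ ∈ Finset.Icc (d - θ) d, (ℓ : ℝ) * binomPMF d ℓ 1 = d := by
  rw [Finset.sum_eq_single_of_mem d (by simp)]
  · rw [binomPMF_one d d le_rfl]; simp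
  · intro ℓ hℓ hne
    rw [binomPMF_one d ℓ (Finset.mem_Icc.mp hℓ).2, if_neg hne, mul_zero]

section Main
variable (p : ℕ × ℕ → ℝ)

/-- the d-th term of hB -/
noncomputable def hBterm (d : ℕ) (z : ℝ) : ℝ :=
  ∑ θ ∈ Finset.Icc 1 d, p (d, θ) *
    ∑ ℓ ∈ Finset.Icc (d - θ) d, (ℓ : ℝ) * binomPMF d ℓ z

lemma hB_eq (z : ℝ) : hB p z = ∑' d, hBterm p d z := rfl

/-- dominating sequence -/
noncomputable def uB (d : ℕ) : ℝ := ∑ θ ∈ Finset.Icc 1 d, (d : ℝ) * p (d, θ)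

lemma hBterm_nonneg (hp0 : ∀ dθ, 0 ≤ p dθ) (d : ℕ) {z : ℝ} (h0 : 0 ≤ z) (h1 : z ≤ 1) :
    0 ≤ hBterm p d z :=
  Finset.sum_nonneg fun θ _ => mul_nonneg (hp0 _) (inner_nonneg d θ h0 h1)

lemma hBterm_le (hp0 : ∀ dθ, 0 ≤ p dθ) (d : ℕ) {z : ℝ} (h0 : 0 ≤ z) (h1 : z ≤ 1) :
    hBterm p d z ≤ uB p d := by
  apply Finset.sum_le_sum
  intro θ _
  rw [mul_comm (d:ℝ)]
  exact mul_le_mul_of_nonneg_left (inner_le d θ h0 h1) (hp0 _)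

lemma uB_summable (hp0 : ∀ dθ, 0 ≤ p dθ)
    (hmean : Summable fun dθ : ℕ × ℕ => (dθ.1 : ℝ) * p dθ) :
    Summable (uB p) := by
  have hnn : 0 ≤ fun dθ : ℕ × ℕ => (dθ.1 : ℝ) * p dθ :=
    fun dθ => mul_nonneg (Nat.cast_nonneg _) (hp0 _)
  obtain ⟨h1, h2⟩ := (summable_prod_of_nonneg hnn).mp hmean
  apply Summable.of_nonneg_of_le (fun d => Finset.sum_nonneg fun θ _ =>
    mul_nonneg (Nat.cast_nonneg _) (hp0 _)) _ h2
  intro d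
  exact Summable.sum_le_tsum _ (fun θ _ => mul_nonneg (Nat.cast_nonneg _) (hp0 _)) (h1 d)

lemma hB_continuousOn (hp0 : ∀ dθ, 0 ≤ p dθ)
    (hmean : Summable fun dθ : ℕ × ℕ => (dθ.1 : ℝ) * p dθ) :
    ContinuousOn (hB p) (Set.Icc (0:ℝ) 1) := by
  rw [continuousOn_iff_continuous_restrict]
  have : (Set.Icc (0:ℝ) 1).domRestrict (hB p)
      = fun x : Set.Icc (0:ℝ) 1 => ∑' d, hBterm p d x := rfl
  rw [this]
  apply continuous_tsum (u := uB p)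
  · intro d
    apply continuous_finset_sum
    intro θ _
    apply Continuous.mul continuous_const
    apply continuous_finset_sum
    intro ℓ _
    apply Continuous.mul continuous_const
    unfold binomPMF
    fun_prop
  · exact uB_summable p hp0 hmean
  · intro d x
    rw [Real.norm_eq_abs, abs_of_nonneg (hBterm_nonneg p hp0 d x.2.1 x.2.2)]
    exact hBterm_le p hp0 d x.2.1 x.2.2

lemma hB_zero : hB p 0 = 0 := by
  rw [hB_eq]
  convert tsum_zero with d
  unfold hBterm
  apply Finset.sum_eq_zero
  intro θ _
  convert mul_zero _
  apply Finset.sum_eq_zero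
  intro ℓ _
  rcases Nat.eq_zero_or_pos ℓ with rfl | hℓ
  · simp
  · unfold binomPMF
    rw [zero_pow hℓ.ne']
    ring

lemma hB_one_le (hp0 : ∀ dθ, 0 ≤ p dθ)
    (hmean : Summable fun dθ : ℕ × ℕ => (dθ.1 : ℝ) * p dθ) :
    hB p 1 ≤ ∑' dθ : ℕ × ℕ, (dθ.1 : ℝ) * p dθ := by
  have hnn : 0 ≤ fun dθ : ℕ × ℕ => (dθ.1 : ℝ) * p dθ :=
    fun dθ => mul_nonneg (Nat.cast_nonneg _) (hp0 _)
  obtain ⟨h1, h2⟩ := (summable_prod_of_nonneg hnn).mp hmean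
  rw [Summable.tsum_prod' hmean h1, hB_eq]
  apply Summable.tsum_le_tsum _ _ h2
  · intro d
    unfold hBterm
    calc ∑ θ ∈ Finset.Icc 1 d, p (d, θ) * ∑ ℓ ∈ Finset.Icc (d - θ) d, (ℓ:ℝ) * binomPMF d ℓ 1
        = ∑ θ ∈ Finset.Icc 1 d, (d : ℝ) * p (d, θ) := by
          apply Finset.sum_congr rfl
          intro θ _
          rw [inner_one, mul_comm]
      _ ≤ ∑' θ : ℕ, (d : ℝ) * p (d, θ) :=
          Summable.sum_le_tsum _ (fun θ _ => mul_nonneg (Nat.cast_nonneg _) (hp0 _)) (h1 d)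
  · -- Summable fun d => hBterm p d 1
    apply Summable.of_nonneg_of_le (fun d => hBterm_nonneg p hp0 d zero_le_one le_rfl)
      (fun d => hBterm_le p hp0 d zero_le_one le_rfl) (uB_summable p hp0 hmean)

end Main

/-- Key step in the proof of Lemma 1.4. Let `p : ℕ×ℕ → [0,1]` be a probability mass function
with mean degree `λ ∈ (0,∞)`, and `ẑ = sup {z ∈ [0,1] : λ z² = h_B(z)}`. If `λ ≠ h_B(1)`,
then `ẑ < 1` and `λ z² > h_B(z)` for every `z ∈ (ẑ, 1]`. -/
theorem strict_positivity_above_sup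
    (p : ℕ × ℕ → ℝ) (hp0 : ∀ dθ, 0 ≤ p dθ) (hp1 : ∀ dθ, p dθ ≤ 1)
    (hpsummable : Summable p) (hptotal : ∑' dθ : ℕ × ℕ, p dθ = 1)
    (hmean : Summable fun dθ : ℕ × ℕ => (dθ.1 : ℝ) * p dθ)
    (lam : ℝ) (hlam : lam = ∑' dθ : ℕ × ℕ, (dθ.1 : ℝ) * p dθ) (hlampos : 0 < lam)
    (hne : lam ≠ hB p 1) :
    sSup {z : ℝ | z ∈ Set.Icc (0:ℝ) 1 ∧ lam * z ^ 2 = hB p z} < 1 ∧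
    ∀ z : ℝ, sSup {z : ℝ | z ∈ Set.Icc (0:ℝ) 1 ∧ lam * z ^ 2 = hB p z} < z → z ≤ 1 →
      hB p z < lam * z ^ 2 := by
  set S := {z : ℝ | z ∈ Set.Icc (0:ℝ) 1 ∧ lam * z ^ 2 = hB p z} with hS
  have hcont : ContinuousOn (hB p) (Set.Icc (0:ℝ) 1) := hB_continuousOn p hp0 hmean
  have hfcont : ContinuousOn (fun z => lam * z ^ 2 - hB p z) (Set.Icc (0:ℝ) 1) :=
    (continuousOn_const.mul (continuous_pow 2).continuousOn).sub hcont
  have hB1 : hB p 1 < lam := by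
    rcases lt_or_eq_of_le (hB_one_le p hp0 hmean) with h | h
    · rwa [← hlam] at h
    · exact absurd (h.symm ▸ hlam) hne
  have h0S : (0:ℝ) ∈ S := by
    refine ⟨⟨le_refl 0, zero_le_one⟩, ?_⟩
    rw [hB_zero]; ring
  have hne' : S.Nonempty := ⟨0, h0S⟩
  have hbdd : BddAbove S := ⟨1, fun z hz => hz.1.2⟩
  have hSclosed : IsClosed S := by
    have : S = Set.Icc (0:ℝ) 1 ∩ (fun z => lam * z ^ 2 - hB p z) ⁻¹' {0} := by
      ext z
      simp only [hS, Set.mem_setOf_eq, Set.mem_inter_iff, Set.mem_preimage,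
        Set.mem_singleton_iff]
      constructor
      · rintro ⟨h1, h2⟩; exact ⟨h1, by linarith⟩
      · rintro ⟨h1, h2⟩; exact ⟨h1, by linarith⟩
    rw [this]
    exact hfcont.preimage_isClosed_of_isClosed isClosed_Icc isClosed_singleton
  have hsup_mem : sSup S ∈ S := hSclosed.csSup_mem hne' hbdd
  have hsup_le : sSup S ≤ 1 := csSup_le hne' fun z hz => hz.1.2
  have h1nS : (1:ℝ) ∉ S := by
    rintro ⟨-, h⟩
    rw [one_pow, mul_one] at h
    exact absurd h.symm hB1.ne
  have hsup_lt : sSup S < 1 := lt_of_le_of_ne hsup_le (fun h => h1nS (h ▸ hsup_mem))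
  refine ⟨hsup_lt, fun z hz hz1 => ?_⟩
  by_contra hcon
  push_neg at hcon
  have hz0 : 0 ≤ z := le_trans (le_csSup hbdd h0S) hz.le
  have hzlt1 : z < 1 ∨ z = 1 := lt_or_eq_of_le hz1
  rcases hzlt1 with hzlt1 | rfl
  · -- IVT on [z,1]
    have hsub : Set.Icc z 1 ⊆ Set.Icc (0:ℝ) 1 := Set.Icc_subset_Icc hz0 le_rfl
    have := intermediate_value_Icc hz1 (hfcont.mono hsub)
    have h0mem : (0:ℝ) ∈ Set.Icc (lam * z ^ 2 - hB p z) (lam * 1 ^ 2 - hB p 1) := by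
      constructor
      · linarith
      · rw [one_pow, mul_one]; linarith
    obtain ⟨c, hc, hceq⟩ := this h0mem
    have hcS : c ∈ S := ⟨hsub hc, by dsimp at hceq; linarith⟩
    have : c ≤ sSup S := le_csSup hbdd hcS
    have : z ≤ c := hc.1
    linarith
  · have : (1:ℝ) ∈ S := ⟨⟨hz0, le_rfl⟩, by nlinarith⟩
    exact h1nS this
end

section
/- Fix integers d ≥ 1 and 0 ≤ m ≤ d, and p ∈ [0,1]; let (u_n) be nonnegative integers with u_n/n → p. For each n consider u_n independent bins, each containing d balls whose lifetimes are i.i.d. Exp(1) random variables (all balls independent), and let S_{n,k}(t) denote the number of balls of bin k alive at time t. Then sup_{t ≥ 0} |(1/n)·∑_{k=1}^{u_n} S_{n,k}(t)·1{S_{n,k}(t) ≥ m} − p·∑_{ℓ=max(m,1)}^{d} ℓ·b(d, e^{−t}, ℓ)| → 0 in probability as n → ∞. -/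
open MeasureTheory ProbabilityTheory Real Filter
open scoped Classical Topology ENNReal

namespace UGC


/-- `φ(c) = c·1{c ≥ m}`. -/
noncomputable def phi (m c : ℕ) : ℝ := (c : ℝ) * (if m ≤ c then 1 else 0)

lemma phi_nonneg (m c : ℕ) : 0 ≤ phi m c := by
  unfold phi; positivity

lemma phi_le {m c d : ℕ} (hc : c ≤ d) : phi m c ≤ d := by
  unfold phi
  rcases le_or_gt m c with h | h
  · simp [h]; exact_mod_cast hc
  · simp [not_le.2 h]

lemma phi_mono (m : ℕ) {c c' : ℕ} (h : c ≤ c') : phi m c ≤ phi m c' := by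
  rcases le_or_gt m c with h1 | h1
  · have e1 : phi m c = c := by simp [phi, h1]
    have e2 : phi m c' = c' := by simp [phi, h1.trans h]
    rw [e1, e2]; exact_mod_cast h
  · have e1 : phi m c = 0 := by simp [phi, not_le.2 h1]
    rw [e1]; exact phi_nonneg _ _

/-- `h(t) = ∑_{ℓ=max(m,1)}^d ℓ b(d, e^{-t}, ℓ)`. -/
noncomputable def hfun (d m : ℕ) (t : ℝ) : ℝ :=
  ∑ ℓ ∈ Finset.Icc (max m 1) d, (ℓ : ℝ) * binomPMF d ℓ (Real.exp (-t))

lemma binomPMF_nonneg {d ℓ : ℕ} {z : ℝ} (h0 : 0 ≤ z) (h1 : z ≤ 1) : 0 ≤ binomPMF d ℓ z := by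
  unfold binomPMF
  have : (0:ℝ) ≤ 1 - z := by linarith
  positivity

lemma binomPMF_le_one {d ℓ : ℕ} {z : ℝ} (h0 : 0 ≤ z) (h1 : z ≤ 1) :
    binomPMF d ℓ z ≤ d.choose ℓ := by
  unfold binomPMF
  have h2 : (0:ℝ) ≤ 1 - z := by linarith
  calc (d.choose ℓ : ℝ) * z ^ ℓ * (1 - z) ^ (d - ℓ)
      ≤ (d.choose ℓ : ℝ) * 1 * 1 := by
        apply mul_le_mul
        · apply mul_le_mul le_rfl (pow_le_one₀ h0 h1) (by positivity) (by positivity)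
        · exact pow_le_one₀ h2 (by linarith)
        · positivity
        · positivity
    _ = d.choose ℓ := by ring

lemma binomPMF_le_z {d ℓ : ℕ} {z : ℝ} (hℓ : 1 ≤ ℓ) (h0 : 0 ≤ z) (h1 : z ≤ 1) :
    binomPMF d ℓ z ≤ d.choose ℓ * z := by
  unfold binomPMF
  have h2 : (0:ℝ) ≤ 1 - z := by linarith
  have hz : z ^ ℓ ≤ z := by
    calc z ^ ℓ ≤ z ^ 1 := pow_le_pow_of_le_one h0 h1 hℓ
    _ = z := pow_one z
  calc (d.choose ℓ : ℝ) * z ^ ℓ * (1 - z) ^ (d - ℓ)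
      ≤ (d.choose ℓ : ℝ) * z ^ ℓ * 1 := by
        apply mul_le_mul le_rfl (pow_le_one₀ h2 (by linarith)) (by positivity) (by positivity)
    _ = (d.choose ℓ : ℝ) * z ^ ℓ := by ring
    _ ≤ (d.choose ℓ : ℝ) * z := by
        apply mul_le_mul le_rfl hz (by positivity) (by positivity)

lemma abs_pow_sub_pow_le {a b : ℝ} (ha0 : 0 ≤ a) (ha1 : a ≤ 1) (hb0 : 0 ≤ b) (hb1 : b ≤ 1)
    (n : ℕ) : |a ^ n - b ^ n| ≤ n * |a - b| := by
  induction n with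
  | zero => simp
  | succ n ih =>
    have key : a ^ (n+1) - b ^ (n+1) = a ^ n * (a - b) + b * (a ^ n - b ^ n) := by ring
    calc |a ^ (n+1) - b ^ (n+1)| ≤ |a ^ n * (a - b)| + |b * (a ^ n - b ^ n)| := by
          rw [key]; exact abs_add_le _ _
      _ = |a ^ n| * |a - b| + |b| * |a ^ n - b ^ n| := by rw [abs_mul, abs_mul]
      _ ≤ 1 * |a - b| + 1 * (n * |a - b|) := by
          apply add_le_add
          · apply mul_le_mul _ le_rfl (abs_nonneg _) zero_le_one
            rw [abs_of_nonneg (by positivity)]; exact pow_le_one₀ ha0 ha1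
          · apply mul_le_mul _ ih (abs_nonneg _) zero_le_one
            rw [abs_of_nonneg hb0]; exact hb1
      _ = ((n + 1 : ℕ) : ℝ) * |a - b| := by push_cast; ring

lemma abs_binomPMF_sub_le {d ℓ : ℕ} (hℓ : ℓ ≤ d) {z w : ℝ} (hz0 : 0 ≤ z) (hz1 : z ≤ 1)
    (hw0 : 0 ≤ w) (hw1 : w ≤ 1) :
    |binomPMF d ℓ z - binomPMF d ℓ w| ≤ d.choose ℓ * d * |z - w| := by
  unfold binomPMF
  have h2z : (0:ℝ) ≤ 1 - z := by linarith
  have h2w : (0:ℝ) ≤ 1 - w := by linarith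
  have key : (d.choose ℓ : ℝ) * z ^ ℓ * (1 - z) ^ (d - ℓ) -
      (d.choose ℓ : ℝ) * w ^ ℓ * (1 - w) ^ (d - ℓ)
      = (d.choose ℓ : ℝ) * ((z ^ ℓ - w ^ ℓ) * (1 - z) ^ (d - ℓ)
        + w ^ ℓ * ((1 - z) ^ (d - ℓ) - (1 - w) ^ (d - ℓ))) := by ring
  rw [key, abs_mul, abs_of_nonneg (by positivity : (0:ℝ) ≤ (d.choose ℓ:ℝ))]
  have h1 : |z ^ ℓ - w ^ ℓ| ≤ ℓ * |z - w| := abs_pow_sub_pow_le hz0 hz1 hw0 hw1 ℓ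
  have h2 : |(1 - z) ^ (d - ℓ) - (1 - w) ^ (d - ℓ)| ≤ (d - ℓ : ℕ) * |(1-z) - (1-w)| :=
    abs_pow_sub_pow_le h2z (by linarith) h2w (by linarith) (d - ℓ)
  have h2' : |(1-z) - (1-w)| = |z - w| := by rw [show (1-z) - (1-w) = -(z-w) by ring, abs_neg]
  rw [h2'] at h2
  have hb1 : |(1 - z) ^ (d - ℓ)| ≤ 1 := by
    rw [abs_of_nonneg (by positivity)]; exact pow_le_one₀ h2z (by linarith)
  have hb2 : |w ^ ℓ| ≤ 1 := by
    rw [abs_of_nonneg (by positivity)]; exact pow_le_one₀ hw0 hw1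
  have habs : |(z ^ ℓ - w ^ ℓ) * (1 - z) ^ (d - ℓ)
        + w ^ ℓ * ((1 - z) ^ (d - ℓ) - (1 - w) ^ (d - ℓ))| ≤ d * |z - w| := by
    calc |(z ^ ℓ - w ^ ℓ) * (1 - z) ^ (d - ℓ)
        + w ^ ℓ * ((1 - z) ^ (d - ℓ) - (1 - w) ^ (d - ℓ))|
        ≤ |z ^ ℓ - w ^ ℓ| * |(1 - z) ^ (d - ℓ)| + |w ^ ℓ| * |(1 - z) ^ (d - ℓ) - (1 - w) ^ (d - ℓ)| := by
          refine (abs_add_le _ _).trans ?_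
          rw [abs_mul, abs_mul]
      _ ≤ (ℓ * |z - w|) * 1 + 1 * ((d - ℓ : ℕ) * |z - w|) := by
          apply add_le_add
          · exact mul_le_mul h1 hb1 (abs_nonneg _) (by positivity)
          · exact mul_le_mul hb2 h2 (abs_nonneg _) zero_le_one
      _ = ((ℓ : ℝ) + (d - ℓ : ℕ)) * |z - w| := by ring
      _ ≤ d * |z - w| := by
          apply mul_le_mul_of_nonneg_right _ (abs_nonneg _)
          have : (ℓ : ℝ) + ((d - ℓ : ℕ) : ℝ) = d := by
            rw [Nat.cast_sub hℓ]; ring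
          linarith
  calc (d.choose ℓ : ℝ) * |(z ^ ℓ - w ^ ℓ) * (1 - z) ^ (d - ℓ)
        + w ^ ℓ * ((1 - z) ^ (d - ℓ) - (1 - w) ^ (d - ℓ))|
      ≤ (d.choose ℓ : ℝ) * (d * |z - w|) := mul_le_mul_of_nonneg_left habs (by positivity)
    _ = (d.choose ℓ : ℝ) * d * |z - w| := by ring


noncomputable def Con (d m : ℕ) : ℝ :=
  ∑ ℓ ∈ Finset.Icc (max m 1) d, (ℓ : ℝ) * d.choose ℓ
lemma exp_neg_mem {t : ℝ} (ht : 0 ≤ t) : 0 ≤ Real.exp (-t) ∧ Real.exp (-t) ≤ 1 :=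
  ⟨(Real.exp_pos _).le, Real.exp_le_one_iff.2 (by linarith)⟩

lemma Con_nonneg (d m : ℕ) : 0 ≤ Con d m := by
  unfold Con
  apply Finset.sum_nonneg
  intro ℓ _; positivity

lemma hfun_nonneg (d m : ℕ) {t : ℝ} (ht : 0 ≤ t) : 0 ≤ hfun d m t := by
  unfold hfun
  apply Finset.sum_nonneg
  intro ℓ _
  have := exp_neg_mem ht
  exact mul_nonneg (by positivity) (binomPMF_nonneg this.1 this.2)

lemma hfun_le_Con (d m : ℕ) {t : ℝ} (ht : 0 ≤ t) : hfun d m t ≤ Con d m := by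
  unfold hfun Con
  apply Finset.sum_le_sum
  intro ℓ _
  have := exp_neg_mem ht
  exact mul_le_mul_of_nonneg_left (binomPMF_le_one this.1 this.2) (by positivity)

lemma hfun_tail (d m : ℕ) {t : ℝ} (ht : 0 ≤ t) : hfun d m t ≤ Con d m * Real.exp (-t) := by
  unfold hfun Con
  rw [Finset.sum_mul]
  apply Finset.sum_le_sum
  intro ℓ hℓ
  have hz := exp_neg_mem ht
  have h1 : 1 ≤ ℓ := le_of_max_le_right (Finset.mem_Icc.1 hℓ).1
  calc (ℓ : ℝ) * binomPMF d ℓ (Real.exp (-t))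
      ≤ (ℓ : ℝ) * (d.choose ℓ * Real.exp (-t)) :=
        mul_le_mul_of_nonneg_left (binomPMF_le_z h1 hz.1 hz.2) (by positivity)
    _ = (ℓ : ℝ) * d.choose ℓ * Real.exp (-t) := by ring

lemma exp_neg_lip {s t : ℝ} (hs : 0 ≤ s) (ht : 0 ≤ t) :
    |Real.exp (-s) - Real.exp (-t)| ≤ |s - t| := by
  wlog h : s ≤ t generalizing s t
  · rw [abs_sub_comm, abs_sub_comm s t]; exact this ht hs (by linarith)
  have h1 : Real.exp (-t) ≤ Real.exp (-s) := Real.exp_le_exp.2 (by linarith)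
  rw [abs_of_nonneg (by linarith), abs_of_nonpos (by linarith)]
  have key : Real.exp (-s) * (1 + (s - t)) ≤ Real.exp (-t) := by
    have := Real.add_one_le_exp (s - t)
    calc Real.exp (-s) * (1 + (s - t)) ≤ Real.exp (-s) * Real.exp (s - t) :=
          mul_le_mul_of_nonneg_left (by linarith) (Real.exp_pos _).le
      _ = Real.exp (-t) := by rw [← Real.exp_add]; ring_nf
  have hes : Real.exp (-s) ≤ 1 := Real.exp_le_one_iff.2 (by linarith)
  nlinarith [Real.exp_pos (-s)]

lemma hfun_lip (d m : ℕ) {s t : ℝ} (hs : 0 ≤ s) (ht : 0 ≤ t) :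
    |hfun d m s - hfun d m t| ≤ d * Con d m * |s - t| := by
  unfold hfun
  rw [← Finset.sum_sub_distrib]
  have hz := exp_neg_mem hs
  have hw := exp_neg_mem ht
  calc |∑ ℓ ∈ Finset.Icc (max m 1) d,
        ((ℓ:ℝ) * binomPMF d ℓ (Real.exp (-s)) - (ℓ:ℝ) * binomPMF d ℓ (Real.exp (-t)))|
      ≤ ∑ ℓ ∈ Finset.Icc (max m 1) d,
        |(ℓ:ℝ) * binomPMF d ℓ (Real.exp (-s)) - (ℓ:ℝ) * binomPMF d ℓ (Real.exp (-t))| :=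
        Finset.abs_sum_le_sum_abs _ _
    _ ≤ ∑ ℓ ∈ Finset.Icc (max m 1) d, (ℓ:ℝ) * d.choose ℓ * (d * |s - t|) := by
        apply Finset.sum_le_sum
        intro ℓ hℓ
        have hℓd : ℓ ≤ d := (Finset.mem_Icc.1 hℓ).2
        rw [← mul_sub, abs_mul, abs_of_nonneg (by positivity : (0:ℝ) ≤ (ℓ:ℝ))]
        calc (ℓ:ℝ) * |binomPMF d ℓ (Real.exp (-s)) - binomPMF d ℓ (Real.exp (-t))|
            ≤ (ℓ:ℝ) * (d.choose ℓ * d * |Real.exp (-s) - Real.exp (-t)|) :=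
              mul_le_mul_of_nonneg_left
                (abs_binomPMF_sub_le hℓd hz.1 hz.2 hw.1 hw.2) (by positivity)
          _ ≤ (ℓ:ℝ) * (d.choose ℓ * d * |s - t|) := by
              apply mul_le_mul_of_nonneg_left _ (by positivity)
              exact mul_le_mul_of_nonneg_left (exp_neg_lip hs ht) (by positivity)
          _ = (ℓ:ℝ) * d.choose ℓ * (d * |s - t|) := by ring
    _ = d * Con d m * |s - t| := by
        rw [← Finset.sum_mul, Con]; ring

lemma hfun_eq_sum_range (d m : ℕ) (hmd : m ≤ d) (t : ℝ) :
    hfun d m t = ∑ c ∈ Finset.range (d + 1), phi m c * binomPMF d c (Real.exp (-t)) := by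
  unfold hfun phi
  have e1 : ∀ c : ℕ, ((c : ℝ) * (if m ≤ c then 1 else 0)) * binomPMF d c (Real.exp (-t))
      = if m ≤ c then (c:ℝ) * binomPMF d c (Real.exp (-t)) else 0 := by
    intro c; split <;> ring
  simp_rw [e1]
  rw [Finset.sum_ite, Finset.sum_const_zero, add_zero]
  have e2 : (Finset.range (d+1)).filter (fun c => m ≤ c) = Finset.Icc m d := by
    ext c; simp [Nat.lt_succ_iff]; omega
  rw [e2]
  rcases Nat.eq_zero_or_pos m with hm | hm
  · subst hm
    have : Finset.Icc 0 d = insert 0 (Finset.Icc (max 0 1) d) := by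
      ext c
      simp [Nat.lt_succ_iff]
      omega
    rw [this, Finset.sum_insert (by simp)]
    simp
  · rw [max_eq_left hm]



variable {Ω : Type*} [MeasurableSpace Ω] {μ : Measure Ω} [IsProbabilityMeasure μ]
variable {K d : ℕ}

/-- number of balls of bin `k` alive at time `t` -/
noncomputable def cnt (f : Fin K × Fin d → Ω → ℝ) (k : Fin K) (t : ℝ) (ω : Ω) : ℕ :=
  (Finset.univ.filter fun i : Fin d => t < f (k, i) ω).card

lemma expMeasure_Ioi {t : ℝ} (ht : 0 ≤ t) :
    expMeasure 1 (Set.Ioi t) = ENNReal.ofReal (Real.exp (-t)) := by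
  have hprob : IsProbabilityMeasure (expMeasure 1) := isProbabilityMeasure_expMeasure one_pos
  have h1 : expMeasure 1 (Set.Iic t) = ENNReal.ofReal (1 - Real.exp (-t)) := by
    rw [← ofReal_cdf]
    congr 1
    rw [cdf_expMeasure_eq one_pos t, if_pos ht, one_mul]
  have h0 : Set.Ioi t = (Set.Iic t)ᶜ := by rw [Set.compl_Iic]
  rw [h0, measure_compl measurableSet_Iic (measure_ne_top _ _), measure_univ, h1]
  have he : Real.exp (-t) ≤ 1 := Real.exp_le_one_iff.2 (by linarith)
  rw [← ENNReal.ofReal_one, ← ENNReal.ofReal_sub _ (by linarith [Real.exp_pos (-t)])]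
  norm_num

variable {f : Fin K × Fin d → Ω → ℝ}

lemma measurableSet_gt (hmeas : ∀ x, Measurable (f x)) (x : Fin K × Fin d) (t : ℝ) :
    MeasurableSet {ω | t < f x ω} := measurableSet_lt measurable_const (hmeas x)

lemma meas_gt (hmeas : ∀ x, Measurable (f x)) (hdist : ∀ x, μ.map (f x) = expMeasure 1)
    (x : Fin K × Fin d) {t : ℝ} (ht : 0 ≤ t) :
    μ {ω | t < f x ω} = ENNReal.ofReal (Real.exp (-t)) := by
  have : {ω | t < f x ω} = f x ⁻¹' Set.Ioi t := rfl
  rw [this, ← Measure.map_apply (hmeas x) measurableSet_Ioi, hdist x, expMeasure_Ioi ht]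

lemma meas_le (hmeas : ∀ x, Measurable (f x)) (hdist : ∀ x, μ.map (f x) = expMeasure 1)
    (x : Fin K × Fin d) {t : ℝ} (ht : 0 ≤ t) :
    μ {ω | t < f x ω}ᶜ = ENNReal.ofReal (1 - Real.exp (-t)) := by
  rw [measure_compl (measurableSet_gt hmeas x t) (measure_ne_top _ _), measure_univ,
    meas_gt hmeas hdist x ht]
  have he : Real.exp (-t) ≤ 1 := Real.exp_le_one_iff.2 (by linarith)
  rw [← ENNReal.ofReal_one, ← ENNReal.ofReal_sub _ (by positivity)]

/-- the elementary cylinder event -/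
noncomputable def Ev (f : Fin K × Fin d → Ω → ℝ) (k : Fin K) (t : ℝ) (s : Finset (Fin d)) :
    Set Ω :=
  ⋂ i : Fin d, if i ∈ s then {ω | t < f (k, i) ω} else {ω | t < f (k, i) ω}ᶜ

lemma measurableSet_Ev (hmeas : ∀ x, Measurable (f x)) (k : Fin K) (t : ℝ)
    (s : Finset (Fin d)) : MeasurableSet (Ev f k t s) := by
  apply MeasurableSet.iInter
  intro i
  split
  · exact measurableSet_gt hmeas _ t
  · exact (measurableSet_gt hmeas _ t).compl

lemma meas_Ev (hmeas : ∀ x, Measurable (f x))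
    (hind : iIndepFun f μ)
    (hdist : ∀ x, μ.map (f x) = expMeasure 1)
    (k : Fin K) {t : ℝ} (ht : 0 ≤ t) (s : Finset (Fin d)) :
    μ (Ev f k t s) = ENNReal.ofReal (Real.exp (-t)) ^ s.card *
      ENNReal.ofReal (1 - Real.exp (-t)) ^ (d - s.card) := by
  classical
  set e : Fin d ↪ Fin K × Fin d := ⟨fun i => (k, i), fun a b h => by simpa using h⟩
  set C : Fin K × Fin d → Set Ω := fun x =>
    if x.2 ∈ s then {ω | t < f x ω} else {ω | t < f x ω}ᶜ with hC
  have hEv : Ev f k t s = ⋂ x ∈ Finset.univ.map e, C x := by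
    ext ω
    simp only [Ev, Set.mem_iInter, Finset.mem_map, Finset.mem_univ, true_and, C]
    constructor
    · intro h x hx
      obtain ⟨i, -, rfl⟩ := hx
      exact h i
    · intro h i
      exact h (e i) ⟨i, rfl⟩
  have hmb : ∀ x ∈ Finset.univ.map e,
      MeasurableSet[MeasurableSpace.comap (f x) inferInstance] (C x) := by
    intro x _
    simp only [C]
    split
    · exact ⟨Set.Ioi t, measurableSet_Ioi, rfl⟩
    · refine ⟨Set.Iic t, measurableSet_Iic, ?_⟩
      ext ω; simp [not_lt]
  rw [hEv, hind.meas_biInter hmb, Finset.prod_map]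
  have hval : ∀ i : Fin d, μ (C (e i)) =
      if i ∈ s then ENNReal.ofReal (Real.exp (-t)) else ENNReal.ofReal (1 - Real.exp (-t)) := by
    intro i
    by_cases hi : i ∈ s
    · simp only [C, e, Function.Embedding.coeFn_mk, hi, if_true]
      exact (show μ (if i ∈ s then {ω | t < f (k, i) ω} else {ω | t < f (k, i) ω}ᶜ) = _ by
        rw [if_pos hi]; exact meas_gt hmeas hdist (k, i) ht)
    · simp only [C, e, Function.Embedding.coeFn_mk, hi, if_false]
      exact (show μ (if i ∈ s then {ω | t < f (k, i) ω} else {ω | t < f (k, i) ω}ᶜ) = _ by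
        rw [if_neg hi]; exact meas_le hmeas hdist (k, i) ht)
  calc ∏ i : Fin d, μ (C (e i))
      = ∏ i : Fin d, (if i ∈ s then ENNReal.ofReal (Real.exp (-t))
          else ENNReal.ofReal (1 - Real.exp (-t))) := Finset.prod_congr rfl fun i _ => hval i
    _ = ENNReal.ofReal (Real.exp (-t)) ^ s.card *
        ENNReal.ofReal (1 - Real.exp (-t)) ^ (d - s.card) := by
        rw [Finset.prod_ite, Finset.prod_const, Finset.prod_const]
        have e1 : (Finset.univ.filter fun i : Fin d => i ∈ s) = s := by
          ext i; simp
        have e2 : (Finset.univ.filter fun i : Fin d => ¬ i ∈ s).card = d - s.card := by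
          have h3 := Finset.card_filter_add_card_filter_not
            (s := (Finset.univ : Finset (Fin d))) (p := fun i => i ∈ s)
          rw [e1] at h3
          simp only [Finset.card_univ, Fintype.card_fin] at h3
          omega
        rw [e1, e2]


lemma Ev_mem_iff {k : Fin K} {t : ℝ} {s : Finset (Fin d)} {ω : Ω} :
    ω ∈ Ev f k t s ↔ (Finset.univ.filter fun i : Fin d => t < f (k, i) ω) = s := by
  simp only [Ev, Set.mem_iInter]
  constructor
  · intro h
    ext i
    simp only [Finset.mem_filter, Finset.mem_univ, true_and]
    have hi := h i
    by_cases his : i ∈ s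
    · rw [if_pos his] at hi
      exact ⟨fun _ => his, fun _ => hi⟩
    · rw [if_neg his] at hi
      exact ⟨fun hlt => absurd hlt hi, fun hi' => absurd hi' his⟩
  · intro h i
    have key : i ∈ s ↔ t < f (k, i) ω := by
      rw [← h]; simp
    by_cases his : i ∈ s
    · rw [if_pos his]; exact key.1 his
    · rw [if_neg his]; exact fun hlt => his (key.2 hlt)

lemma cnt_eq_decomp (k : Fin K) (t : ℝ) (c : ℕ) :
    {ω | cnt f k t ω = c} =
      ⋃ s ∈ Finset.powersetCard c (Finset.univ : Finset (Fin d)), Ev f k t s := by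
  ext ω
  simp only [Set.mem_setOf_eq, Set.mem_iUnion, exists_prop]
  constructor
  · intro h
    refine ⟨Finset.univ.filter fun i : Fin d => t < f (k, i) ω,
      Finset.mem_powersetCard.2 ⟨Finset.subset_univ _, h⟩, Ev_mem_iff.2 rfl⟩
  · rintro ⟨s, hs, hmem⟩
    have := Ev_mem_iff.1 hmem
    rw [cnt, this]
    exact (Finset.mem_powersetCard.1 hs).2

lemma measurableSet_cnt_eq (hmeas : ∀ x, Measurable (f x)) (k : Fin K) (t : ℝ) (c : ℕ) :
    MeasurableSet {ω | cnt f k t ω = c} := by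
  rw [cnt_eq_decomp]
  exact MeasurableSet.biUnion (Finset.countable_toSet _)
    fun s _ => measurableSet_Ev hmeas k t s

lemma measurable_cnt (hmeas : ∀ x, Measurable (f x)) (k : Fin K) (t : ℝ) :
    Measurable (fun ω => cnt f k t ω) := by
  apply measurable_to_countable'
  intro c
  exact measurableSet_cnt_eq hmeas k t c

lemma meas_cnt_eq (hmeas : ∀ x, Measurable (f x))
    (hind : iIndepFun f μ)
    (hdist : ∀ x, μ.map (f x) = expMeasure 1)
    (k : Fin K) {t : ℝ} (ht : 0 ≤ t) (c : ℕ) :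
    μ {ω | cnt f k t ω = c} = (d.choose c : ℝ≥0∞) *
      (ENNReal.ofReal (Real.exp (-t)) ^ c * ENNReal.ofReal (1 - Real.exp (-t)) ^ (d - c)) := by
  rw [cnt_eq_decomp]
  rw [measure_biUnion_finset ?hdisj fun s _ => measurableSet_Ev hmeas k t s]
  · have : ∀ s ∈ Finset.powersetCard c (Finset.univ : Finset (Fin d)),
        μ (Ev f k t s) = ENNReal.ofReal (Real.exp (-t)) ^ c *
          ENNReal.ofReal (1 - Real.exp (-t)) ^ (d - c) := by
      intro s hs
      have hcard := (Finset.mem_powersetCard.1 hs).2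
      rw [meas_Ev hmeas hind hdist k ht s, hcard]
    rw [Finset.sum_congr rfl this, Finset.sum_const, Finset.card_powersetCard,
      Finset.card_univ, Fintype.card_fin, nsmul_eq_mul]
  case hdisj =>
    intro s hs s' hs' hne
    rw [Function.onFun, Set.disjoint_left]
    intro ω hω hω'
    exact hne (by rw [← Ev_mem_iff.1 hω, Ev_mem_iff.1 hω'])

lemma meas_cnt_toReal (hmeas : ∀ x, Measurable (f x))
    (hind : iIndepFun f μ)
    (hdist : ∀ x, μ.map (f x) = expMeasure 1)
    (k : Fin K) {t : ℝ} (ht : 0 ≤ t) (c : ℕ) :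
    (μ {ω | cnt f k t ω = c}).toReal = binomPMF d c (Real.exp (-t)) := by
  rw [meas_cnt_eq hmeas hind hdist k ht c]
  have he : Real.exp (-t) ≤ 1 := Real.exp_le_one_iff.2 (by linarith)
  rw [ENNReal.toReal_mul, ENNReal.toReal_mul, ENNReal.toReal_pow, ENNReal.toReal_pow,
    ENNReal.toReal_natCast, ENNReal.toReal_ofReal (Real.exp_pos _).le,
    ENNReal.toReal_ofReal (by linarith)]
  rw [binomPMF, mul_assoc]


/-- the summand random variable -/
noncomputable def Xv (m : ℕ) (f : Fin K × Fin d → Ω → ℝ) (k : Fin K) (t : ℝ) (ω : Ω) : ℝ :=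
  phi m (cnt f k t ω)

lemma cnt_le_d (k : Fin K) (t : ℝ) (ω : Ω) : cnt f k t ω ≤ d := by
  unfold cnt
  calc (Finset.univ.filter fun i : Fin d => t < f (k, i) ω).card
      ≤ (Finset.univ : Finset (Fin d)).card := Finset.card_filter_le _ _
    _ = d := by simp

lemma Xv_nonneg (m : ℕ) (k : Fin K) (t : ℝ) (ω : Ω) : 0 ≤ Xv m f k t ω := phi_nonneg _ _

lemma Xv_le_d (m : ℕ) (k : Fin K) (t : ℝ) (ω : Ω) : Xv m f k t ω ≤ d :=
  phi_le (cnt_le_d k t ω)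

lemma Xv_anti (m : ℕ) (k : Fin K) {s t : ℝ} (hst : s ≤ t) (ω : Ω) :
    Xv m f k t ω ≤ Xv m f k s ω := by
  apply phi_mono
  apply Finset.card_le_card
  intro i hi
  simp only [Finset.mem_filter] at hi ⊢
  exact ⟨hi.1, lt_of_le_of_lt hst hi.2⟩

lemma measurable_Xv (hmeas : ∀ x, Measurable (f x)) (m : ℕ) (k : Fin K) (t : ℝ) :
    Measurable (Xv m f k t) := by
  have h1 : Measurable (phi m) := measurable_from_top
  exact h1.comp (measurable_cnt hmeas k t)

lemma integrable_Xv (hmeas : ∀ x, Measurable (f x)) (m : ℕ) (k : Fin K) (t : ℝ) :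
    Integrable (Xv m f k t) μ := by
  apply Integrable.mono' (integrable_const (d : ℝ)) (measurable_Xv hmeas m k t).aestronglyMeasurable
  filter_upwards with ω
  rw [Real.norm_eq_abs, abs_of_nonneg (Xv_nonneg m k t ω)]
  exact Xv_le_d m k t ω

lemma integral_Xv (hmeas : ∀ x, Measurable (f x))
    (hind : iIndepFun f μ)
    (hdist : ∀ x, μ.map (f x) = expMeasure 1)
    (m : ℕ) (hmd : m ≤ d) (k : Fin K) {t : ℝ} (ht : 0 ≤ t) :
    ∫ ω, Xv m f k t ω ∂μ = hfun d m t := by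
  have hXe : Xv m f k t = fun ω => ∑ c ∈ Finset.range (d + 1),
      Set.indicator {ω' | cnt f k t ω' = c} (fun _ => phi m c) ω := by
    funext ω
    rw [Finset.sum_eq_single (cnt f k t ω)]
    · rw [Set.indicator_of_mem (by exact rfl : ω ∈ {ω' | cnt f k t ω' = cnt f k t ω})]
      rfl
    · intro c _ hc
      exact Set.indicator_of_notMem (fun h => hc (by exact h.symm ▸ rfl)) _
    · intro h
      exact absurd (Finset.mem_range.2 (Nat.lt_succ_of_le (cnt_le_d k t ω))) h
  rw [hXe, integral_finset_sum]
  · have : ∀ c ∈ Finset.range (d + 1),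
        ∫ ω, Set.indicator {ω' | cnt f k t ω' = c} (fun _ => phi m c) ω ∂μ
          = phi m c * binomPMF d c (Real.exp (-t)) := by
      intro c _
      rw [integral_indicator_const _ (measurableSet_cnt_eq hmeas k t c),
        measureReal_def, meas_cnt_toReal hmeas hind hdist k ht c, smul_eq_mul, mul_comm]
    rw [Finset.sum_congr rfl this, ← hfun_eq_sum_range d m hmd]
  · intro c _
    exact (integrable_const (phi m c)).indicator (measurableSet_cnt_eq hmeas k t c)

lemma hfun_le_d (hmeas : ∀ x, Measurable (f x))
    (hind : iIndepFun f μ)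
    (hdist : ∀ x, μ.map (f x) = expMeasure 1)
    (m : ℕ) (hmd : m ≤ d) (hK : 0 < K) {t : ℝ} (ht : 0 ≤ t) :
    hfun d m t ≤ d := by
  have k : Fin K := ⟨0, hK⟩
  rw [← integral_Xv hmeas hind hdist m hmd k ht]
  calc ∫ ω, Xv m f k t ω ∂μ ≤ ∫ _ω, (d : ℝ) ∂μ :=
        integral_mono (integrable_Xv hmeas m k t) (integrable_const _) (Xv_le_d m k t)
    _ = d := by simp

lemma indepFun_Xv (hmeas : ∀ x, Measurable (f x))
    (hind : iIndepFun f μ)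
    (m : ℕ) (t : ℝ) {k j : Fin K} (hkj : k ≠ j) :
    IndepFun (Xv m f k t) (Xv m f j t) μ := by
  classical
  set Sk : Finset (Fin K × Fin d) := Finset.univ.filter (fun x => x.1 = k) with hSk
  set Sj : Finset (Fin K × Fin d) := Finset.univ.filter (fun x => x.1 = j) with hSj
  have hdisj : Disjoint Sk Sj := by
    rw [Finset.disjoint_left]
    intro x hx hx'
    simp only [Sk, Sj, Finset.mem_filter] at hx hx'
    exact hkj (hx.2 ▸ hx'.2 ▸ rfl)
  have base := hind.indepFun_finset Sk Sj hdisj hmeas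
  have memk : ∀ i : Fin d, ((k, i) : Fin K × Fin d) ∈ Sk := fun i => by simp [Sk]
  have memj : ∀ i : Fin d, ((j, i) : Fin K × Fin d) ∈ Sj := fun i => by simp [Sj]
  set Φk : ((x : Sk) → ℝ) → ℝ := fun g =>
    phi m ((Finset.univ.filter fun i : Fin d => t < g ⟨(k, i), memk i⟩).card) with hΦk
  set Φj : ((x : Sj) → ℝ) → ℝ := fun g =>
    phi m ((Finset.univ.filter fun i : Fin d => t < g ⟨(j, i), memj i⟩).card) with hΦj
  have hmeasΦ : ∀ (S : Finset (Fin K × Fin d)) (κ : Fin d → S),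
      Measurable (fun g : (x : S) → ℝ =>
        phi m ((Finset.univ.filter fun i : Fin d => t < g (κ i)).card)) := by
    intro S κ
    have h1 : Measurable (fun g : (x : S) → ℝ =>
        (Finset.univ.filter fun i : Fin d => t < g (κ i)).card) := by
      simp_rw [Finset.card_filter]
      apply Finset.measurable_sum
      intro i _
      have : MeasurableSet {g : (x : S) → ℝ | t < g (κ i)} :=
        measurableSet_lt measurable_const (measurable_pi_apply (κ i))
      exact Measurable.ite this measurable_const measurable_const
    exact (measurable_from_top (f := phi m)).comp h1
  have ek : Xv m f k t = Φk ∘ (fun ω (x : Sk) => f x ω) := rfl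
  have ej : Xv m f j t = Φj ∘ (fun ω (x : Sj) => f x ω) := rfl
  rw [ek, ej]
  exact base.comp (hmeasΦ Sk _) (hmeasΦ Sj _)


lemma second_moment (hmeas : ∀ x, Measurable (f x))
    (hind : iIndepFun f μ)
    (hdist : ∀ x, μ.map (f x) = expMeasure 1)
    (m : ℕ) (hmd : m ≤ d) {t : ℝ} (ht : 0 ≤ t) :
    ∫ ω, (∑ k : Fin K, (Xv m f k t ω - hfun d m t)) ^ 2 ∂μ ≤ K * d ^ 2 := by
  rcases Nat.eq_zero_or_pos K with hK | hK
  · subst hK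
    simp
  set H := hfun d m t with hH
  have hH0 : 0 ≤ H := hfun_nonneg d m ht
  have hHd : H ≤ d := hfun_le_d hmeas hind hdist m hmd hK ht
  set Y : Fin K → Ω → ℝ := fun k ω => Xv m f k t ω - H with hY
  have hYmeas : ∀ k, Measurable (Y k) := fun k => (measurable_Xv hmeas m k t).sub measurable_const
  have hYbd : ∀ k ω, |Y k ω| ≤ d := by
    intro k ω
    rw [abs_le]
    constructor
    · have := Xv_nonneg (f := f) m k t ω; simp only [Y]; linarith
    · have := Xv_le_d (f := f) m k t ω; simp only [Y]; linarith
  have hYint : ∀ k, Integrable (Y k) μ := fun k =>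
    (integrable_Xv hmeas m k t).sub (integrable_const H)
  have hYint2 : ∀ k j, Integrable (fun ω => Y k ω * Y j ω) μ := by
    intro k j
    apply Integrable.mono' (integrable_const ((d : ℝ) * d))
      ((hYmeas k).mul (hYmeas j)).aestronglyMeasurable
    filter_upwards with ω
    rw [Real.norm_eq_abs, Pi.mul_apply, abs_mul]
    exact mul_le_mul (hYbd k ω) (hYbd j ω) (abs_nonneg _) (Nat.cast_nonneg d)
  have hEY : ∀ k, ∫ ω, Y k ω ∂μ = 0 := by
    intro k
    rw [integral_sub (integrable_Xv hmeas m k t) (integrable_const H),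
      integral_Xv hmeas hind hdist m hmd k ht, integral_const]
    simp [hH]
  have hcross : ∀ k j : Fin K, k ≠ j → ∫ ω, Y k ω * Y j ω ∂μ = 0 := by
    intro k j hkj
    have hYI : IndepFun (Y k) (Y j) μ := by
      have := (indepFun_Xv hmeas hind m t hkj).comp
        (φ := fun x : ℝ => x - H) (ψ := fun x : ℝ => x - H)
        (measurable_id.sub measurable_const) (measurable_id.sub measurable_const)
      exact this
    have h0 : ∫ ω, Y k ω * Y j ω ∂μ = (∫ ω, Y k ω ∂μ) * ∫ ω, Y j ω ∂μ :=
      hYI.integral_mul_eq_mul_integral (hYint k).aestronglyMeasurable (hYint j).aestronglyMeasurable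
    rw [h0, hEY k, hEY j, mul_zero]
  have hsq : ∀ ω, (∑ k : Fin K, Y k ω) ^ 2 = ∑ k : Fin K, ∑ j : Fin K, Y k ω * Y j ω := by
    intro ω
    rw [sq, Finset.sum_mul_sum]
  calc ∫ ω, (∑ k : Fin K, Y k ω) ^ 2 ∂μ
      = ∫ ω, ∑ k : Fin K, ∑ j : Fin K, Y k ω * Y j ω ∂μ := by
        apply integral_congr_ae
        filter_upwards with ω using hsq ω
    _ = ∑ k : Fin K, ∑ j : Fin K, ∫ ω, Y k ω * Y j ω ∂μ := by
        rw [integral_finset_sum _ fun k _ => integrable_finset_sum _ fun j _ => hYint2 k j]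
        exact Finset.sum_congr rfl fun k _ => integral_finset_sum _ fun j _ => hYint2 k j
    _ = ∑ k : Fin K, ∫ ω, Y k ω * Y k ω ∂μ := by
        apply Finset.sum_congr rfl
        intro k _
        exact Finset.sum_eq_single_of_mem k (Finset.mem_univ k)
          (fun j _ hjk => hcross k j (Ne.symm hjk))
    _ ≤ ∑ _k : Fin K, (d : ℝ) ^ 2 := by
        apply Finset.sum_le_sum
        intro k _
        calc ∫ ω, Y k ω * Y k ω ∂μ ≤ ∫ _ω, (d : ℝ) ^ 2 ∂μ := by
              apply integral_mono (hYint2 k k) (integrable_const _)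
              intro ω
              have h1 := hYbd k ω
              calc Y k ω * Y k ω = |Y k ω| ^ 2 := by rw [sq_abs]; ring
                _ ≤ (d : ℝ) ^ 2 := by
                    apply pow_le_pow_left₀ (abs_nonneg _) h1
          _ = (d : ℝ) ^ 2 := by simp
    _ = K * d ^ 2 := by simp [mul_comm]

lemma cheb (hmeas : ∀ x, Measurable (f x))
    (hind : iIndepFun f μ)
    (hdist : ∀ x, μ.map (f x) = expMeasure 1)
    (m : ℕ) (hmd : m ≤ d) {t ε : ℝ} (ht : 0 ≤ t) (hε : 0 < ε) :
    μ {ω | ε ≤ |∑ k : Fin K, (Xv m f k t ω - hfun d m t)|} ≤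
      ENNReal.ofReal (K * d ^ 2 / ε ^ 2) := by
  set Z : Ω → ℝ := fun ω => ∑ k : Fin K, (Xv m f k t ω - hfun d m t) with hZ
  have hZmeas : Measurable Z :=
    Finset.measurable_sum _ fun k _ => (measurable_Xv hmeas m k t).sub measurable_const
  have hYbd : ∀ (k : Fin K) (ω : Ω), |Xv m f k t ω - hfun d m t| ≤ d + Con d m := by
    intro k ω
    have h1 := Xv_nonneg (f := f) m k t ω
    have h2 := Xv_le_d (f := f) m k t ω
    have h3 := hfun_nonneg d m ht
    have h4 := hfun_le_Con d m ht
    rw [abs_le]; constructor <;> linarith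
  have hZbd : ∀ ω, |Z ω| ≤ K * (d + Con d m) := by
    intro ω
    calc |Z ω| ≤ ∑ k : Fin K, |Xv m f k t ω - hfun d m t| := Finset.abs_sum_le_sum_abs _ _
      _ ≤ ∑ _k : Fin K, ((d : ℝ) + Con d m) := Finset.sum_le_sum fun k _ => hYbd k ω
      _ = K * (d + Con d m) := by simp [mul_comm]; ring
  have hZ2int : Integrable (fun ω => Z ω ^ 2) μ := by
    apply Integrable.mono' (integrable_const ((K * ((d : ℝ) + Con d m)) ^ 2))
      (hZmeas.pow_const 2).aestronglyMeasurable
    filter_upwards with ω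
    rw [Real.norm_eq_abs, abs_of_nonneg (sq_nonneg _), ← sq_abs]
    exact pow_le_pow_left₀ (abs_nonneg _) (hZbd ω) 2
  have hsub : {ω | ε ≤ |Z ω|} ⊆ {ω | ε ^ 2 ≤ Z ω ^ 2} := by
    intro ω hω
    simp only [Set.mem_setOf_eq] at hω ⊢
    calc ε ^ 2 ≤ |Z ω| ^ 2 := pow_le_pow_left₀ hε.le hω 2
      _ = Z ω ^ 2 := sq_abs _
  have hmarkov := mul_meas_ge_le_integral_of_nonneg
    (ae_of_all μ fun ω => sq_nonneg (Z ω)) hZ2int (ε ^ 2)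
  have h2 := second_moment hmeas hind hdist m hmd ht (t := t)
  have hfin : μ {ω | ε ^ 2 ≤ Z ω ^ 2} ≠ ⊤ := measure_ne_top _ _
  have htoReal : (μ {ω | ε ^ 2 ≤ Z ω ^ 2}).toReal ≤ K * d ^ 2 / ε ^ 2 := by
    rw [le_div_iff₀ (by positivity)]
    calc (μ {ω | ε ^ 2 ≤ Z ω ^ 2}).toReal * ε ^ 2
        = ε ^ 2 * (μ {x | ε ^ 2 ≤ Z x ^ 2}).toReal := by ring
      _ ≤ ∫ ω, Z ω ^ 2 ∂μ := hmarkov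
      _ ≤ K * d ^ 2 := h2
  calc μ {ω | ε ≤ |Z ω|} ≤ μ {ω | ε ^ 2 ≤ Z ω ^ 2} := measure_mono hsub
    _ ≤ ENNReal.ofReal (K * d ^ 2 / ε ^ 2) := by
        rw [← ENNReal.ofReal_toReal hfin]
        exact ENNReal.ofReal_le_ofReal htoReal


/-- independence is preserved under a.e. modification -/
lemma iIndepFun_ae_eq {ι : Type*} {β : ι → Type*} {mβ : ∀ i, MeasurableSpace (β i)}
    {f g : ∀ i, Ω → β i} (hf : iIndepFun f μ) (h : ∀ i, f i =ᵐ[μ] g i) :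
    iIndepFun g μ := by
  rw [iIndepFun_iff] at hf ⊢
  intro s f' H
  have hB : ∀ i ∈ s, ∃ B, MeasurableSet[mβ i] B ∧ g i ⁻¹' B = f' i := H
  choose! B hBmeas hBeq using hB
  have hae : ∀ i ∈ s, f' i =ᵐ[μ] f i ⁻¹' B i := by
    intro i hi
    rw [← hBeq i hi]
    exact ((h i).preimage (B i)).symm
  have h1 : (⋂ i ∈ s, f' i) =ᵐ[μ] (⋂ i ∈ s, f i ⁻¹' B i) := by
    rw [Filter.eventuallyEq_set]
    have hall : ∀ᵐ ω ∂μ, ∀ i ∈ (s : Set ι), (ω ∈ f' i ↔ ω ∈ f i ⁻¹' B i) := by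
      rw [ae_ball_iff s.countable_toSet]
      intro i hi
      exact Filter.eventuallyEq_set.1 (hae i hi)
    filter_upwards [hall] with ω hω
    simp only [Set.mem_iInter]
    exact ⟨fun h' i hi => (hω i (Finset.mem_coe.2 hi)).1 (h' i hi),
      fun h' i hi => (hω i (Finset.mem_coe.2 hi)).2 (h' i hi)⟩
  rw [measure_congr h1, hf s (fun i hi => ⟨B i, hBmeas i hi, rfl⟩)]
  exact Finset.prod_congr rfl fun i hi => (measure_congr (hae i hi)).symm

/-- helper for bounding the restricted supremum -/
lemma sup_abs_le {F : ℝ → ℝ} {a : ℝ} (ha : 0 ≤ a) (hF : ∀ t, 0 ≤ t → |F t| ≤ a) :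
    dist (⨆ (t : ℝ) (_ : 0 ≤ t), |F t|) 0 ≤ a := by
  have h1 : ∀ t : ℝ, (⨆ (_ : 0 ≤ t), |F t|) ≤ a := by
    intro t
    by_cases ht : 0 ≤ t
    · rw [ciSup_pos ht]; exact hF t ht
    · haveI : IsEmpty (0 ≤ t) := by simpa using ht
      rw [Real.iSup_of_isEmpty]; exact ha
  have h2 : ∀ t : ℝ, 0 ≤ ⨆ (_ : 0 ≤ t), |F t| := by
    intro t
    by_cases ht : 0 ≤ t
    · rw [ciSup_pos ht]; exact abs_nonneg _
    · haveI : IsEmpty (0 ≤ t) := by simpa using ht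
      rw [Real.iSup_of_isEmpty]
  rw [Real.dist_eq, sub_zero, abs_of_nonneg (Real.iSup_nonneg h2)]
  exact Real.iSup_le h1 ha

/-- the deterministic interpolation argument -/
lemma sandwich {G F : ℝ → ℝ} {c L C ε' : ℝ} (hc0 : 0 ≤ c) (hc2 : c ≤ 2)
    (hF_anti : ∀ s t : ℝ, s ≤ t → F t ≤ F s) (hF0 : ∀ t, 0 ≤ t → 0 ≤ F t)
    (hGlip : ∀ s t : ℝ, 0 ≤ s → 0 ≤ t → |G s - G t| ≤ L * |s - t|)
    (hGtail : ∀ t : ℝ, 0 ≤ t → G t ≤ C * Real.exp (-t)) (hG0 : ∀ t, 0 ≤ t → 0 ≤ G t)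
    (hL0 : 0 ≤ L) (hC0 : 0 ≤ C) (hε' : 0 < ε')
    {N : ℕ} {η : ℝ} (hη : 0 < η) (hLη : L * η ≤ ε')
    (htail : C * Real.exp (-(N * η)) ≤ ε')
    (hgrid : ∀ j : ℕ, j ≤ N → |F (j * η) - c * G (j * η)| ≤ ε') :
    ∀ t : ℝ, 0 ≤ t → |F t - c * G t| ≤ 3 * ε' := by
  intro t ht
  rcases lt_or_ge t (N * η) with hcase | hcase
  · -- interpolation case
    set j : ℕ := ⌊t / η⌋₊ with hj
    have hdiv0 : 0 ≤ t / η := by positivity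
    have hjN : j + 1 ≤ N := by
      have h1 : t / η < N := (div_lt_iff₀ hη).2 hcase
      have h2 : j < N := (Nat.floor_lt hdiv0).2 h1
      omega
    have hjt : (j : ℝ) * η ≤ t := by
      have h1 : (j : ℝ) ≤ t / η := Nat.floor_le hdiv0
      calc (j : ℝ) * η ≤ (t / η) * η := mul_le_mul_of_nonneg_right h1 hη.le
        _ = t := div_mul_cancel₀ t hη.ne'
    have htj1 : t ≤ ((j + 1 : ℕ) : ℝ) * η := by
      have h1 : t / η < ((j + 1 : ℕ) : ℝ) := by
        push_cast
        exact Nat.lt_floor_add_one (t / η)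
      have := (div_lt_iff₀ hη).1 h1
      linarith
    have hj0 : (0 : ℝ) ≤ (j : ℝ) * η := by positivity
    have hj10 : (0 : ℝ) ≤ ((j + 1 : ℕ) : ℝ) * η := by positivity
    have hLη0 : 0 ≤ L * η := by positivity
    have hd1 : |G ((j : ℝ) * η) - G t| ≤ L * η := by
      calc |G ((j : ℝ) * η) - G t| ≤ L * |(j : ℝ) * η - t| := hGlip _ _ hj0 ht
        _ ≤ L * η := by
            apply mul_le_mul_of_nonneg_left _ hL0
            rw [abs_of_nonpos (by linarith)]
            push_cast at htj1
            linarith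
    have hd2 : |G (((j + 1 : ℕ) : ℝ) * η) - G t| ≤ L * η := by
      calc |G (((j + 1 : ℕ) : ℝ) * η) - G t| ≤ L * |((j + 1 : ℕ) : ℝ) * η - t| :=
            hGlip _ _ hj10 ht
        _ ≤ L * η := by
            apply mul_le_mul_of_nonneg_left _ hL0
            rw [abs_of_nonneg (by linarith)]
            push_cast
            push_cast at hjt
            linarith
    have hg1 := abs_le.1 (hgrid j (by omega))
    have hg2 := abs_le.1 (hgrid (j + 1) hjN)
    have hFu : F t ≤ F ((j : ℝ) * η) := hF_anti _ _ hjt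
    have hFl : F (((j + 1 : ℕ) : ℝ) * η) ≤ F t := hF_anti _ _ htj1
    have he1 := abs_le.1 hd1
    have he2 := abs_le.1 hd2
    have hp1 : c * G ((j : ℝ) * η) - c * G t ≤ 2 * (L * η) := by
      have h1 : c * (G ((j : ℝ) * η) - G t) ≤ c * (L * η) :=
        mul_le_mul_of_nonneg_left he1.2 hc0
      have h2 : c * (L * η) ≤ 2 * (L * η) := mul_le_mul_of_nonneg_right hc2 hLη0
      nlinarith
    have hp2 : -(2 * (L * η)) ≤ c * G (((j + 1 : ℕ) : ℝ) * η) - c * G t := by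
      have h1 : c * (-(L * η)) ≤ c * (G (((j + 1 : ℕ) : ℝ) * η) - G t) :=
        mul_le_mul_of_nonneg_left (by linarith [he2.1]) hc0
      have h2 : 2 * (-(L * η)) ≤ c * (-(L * η)) := by nlinarith
      nlinarith
    rw [abs_le]
    constructor
    · linarith [hFl, hg2.1, hp2, hLη]
    · linarith [hFu, hg1.2, hp1, hLη]
  · -- tail case
    have hGt : G t ≤ ε' := by
      calc G t ≤ C * Real.exp (-t) := hGtail t ht
        _ ≤ C * Real.exp (-(N * η)) :=
          mul_le_mul_of_nonneg_left (Real.exp_le_exp.2 (by linarith)) hC0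
        _ ≤ ε' := htail
    have hNη : (0 : ℝ) ≤ N * η := by positivity
    have hFt : F t ≤ F (N * η) := hF_anti _ _ hcase
    have hgN := hgrid N le_rfl
    have hGN : G (N * η) ≤ ε' := by
      calc G (N * η) ≤ C * Real.exp (-(N * η)) := hGtail _ hNη
        _ ≤ ε' := htail
    have hGN0 : 0 ≤ G (N * η) := hG0 _ hNη
    have hGt0 : 0 ≤ G t := hG0 _ ht
    have h6 : c * G t ≤ 2 * ε' := by
      have a1 : c * G t ≤ c * ε' := mul_le_mul_of_nonneg_left hGt hc0
      have a2 : c * ε' ≤ 2 * ε' := mul_le_mul_of_nonneg_right hc2 hε'.le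
      linarith
    have h7 : c * G (N * η) ≤ 2 * ε' := by
      have a1 : c * G (N * η) ≤ c * ε' := mul_le_mul_of_nonneg_left hGN hc0
      have a2 : c * ε' ≤ 2 * ε' := mul_le_mul_of_nonneg_right hc2 hε'.le
      linarith
    have h8 : 0 ≤ c * G t := mul_nonneg hc0 hGt0
    have h5 := abs_le.1 hgN
    rw [abs_le]
    constructor
    · linarith [hF0 t ht]
    · linarith [hFt, h5.2]

end UGC

/-- **Uniform LLN for the number of white balls in surviving bins** (single-class version of
equation (3.30) of the paper). Fix `d ≥ 1`, `0 ≤ m ≤ d`, `p ∈ [0,1]`, and `u_n/n → p`. For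
each `n` consider `u_n` independent bins of `d` balls with i.i.d. `Exp(1)` lifetimes, and let
`S_{n,k}(t)` be the number of balls of bin `k` alive at time `t`. Then
`sup_{t ≥ 0} |(1/n) ∑_{k<u_n} S_{n,k}(t) 1{S_{n,k}(t) ≥ m} − p ∑_{ℓ=max(m,1)}^d ℓ b(d,e^{−t},ℓ)| → 0`
in probability as `n → ∞`. -/
theorem uniform_lln_white_balls
    {Ω : Type*} [MeasurableSpace Ω] (μ : Measure Ω) [IsProbabilityMeasure μ]
    (d m : ℕ) (hd : 1 ≤ d) (hmd : m ≤ d)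
    (p : ℝ) (hp0 : 0 ≤ p) (hp1 : p ≤ 1)
    (u : ℕ → ℕ) (hu : Tendsto (fun n : ℕ => (u n : ℝ) / (n : ℝ)) atTop (𝓝 p))
    (T : ℕ → ℕ → Fin d → Ω → ℝ)
    (hindep : ∀ n, iIndepFun
      (fun x : Fin (u n) × Fin d => T n x.1 x.2) μ)
    (hdist : ∀ n, ∀ k < u n, ∀ i : Fin d, μ.map (T n k i) = expMeasure 1) :
    TendstoInMeasure μ
      (fun (n : ℕ) (ω : Ω) => ⨆ (t : ℝ) (_ : 0 ≤ t),
        |(∑ k ∈ Finset.range (u n),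
            (((Finset.univ.filter fun i : Fin d => t < T n k i ω).card : ℝ) *
              (if m ≤ (Finset.univ.filter fun i : Fin d => t < T n k i ω).card
                then 1 else 0))) / (n : ℝ)
          - p * ∑ ℓ ∈ Finset.Icc (max m 1) d, (ℓ : ℝ) * binomPMF d ℓ (Real.exp (-t))|)
      atTop (fun _ => (0 : ℝ)) := by
  classical
  rw [tendstoInMeasure_iff_dist]
  intro ε hε
  rw [ENNReal.tendsto_nhds_zero]
  intro δ hδ
  -- constants
  set ε' : ℝ := ε / 5 with hε'def
  have hε' : 0 < ε' := by positivity
  set L : ℝ := d * UGC.Con d m with hLdef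
  have hL0 : 0 ≤ L := mul_nonneg (Nat.cast_nonneg d) (UGC.Con_nonneg d m)
  set C : ℝ := UGC.Con d m with hCdef
  have hC0 : 0 ≤ C := UGC.Con_nonneg d m
  set η : ℝ := ε' / (L + 1) with hηdef
  have hη : 0 < η := by positivity
  have hLη : L * η ≤ ε' := by
    have h1 : L * η * (L + 1) = L * ε' := by rw [hηdef]; field_simp
    nlinarith [hε'.le, hL0]
  -- tail cutoff
  obtain ⟨N, hN⟩ : ∃ N : ℕ, C * Real.exp (-(N * η)) ≤ ε' := by
    have h1 : Tendsto (fun N : ℕ => (N : ℝ) * η) atTop atTop :=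
      Tendsto.atTop_mul_const hη tendsto_natCast_atTop_atTop
    have h2 : Tendsto (fun N : ℕ => C * Real.exp (-((N : ℝ) * η))) atTop (𝓝 (C * 0)) :=
      Tendsto.const_mul C (Real.tendsto_exp_atBot.comp (tendsto_neg_atBot_iff.2 h1))
    rw [mul_zero] at h2
    exact (h2.eventually_le_const hε').exists
  -- eventual conditions
  have hcond1 : ∀ᶠ n : ℕ in atTop,
      |((u n : ℝ) / n) - p| ≤ min (ε' / (C + 1)) 1 := by
    have hr : 0 < min (ε' / (C + 1)) 1 := lt_min (by positivity) one_pos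
    filter_upwards [hu.eventually (Metric.closedBall_mem_nhds p hr)] with n hn
    rw [Real.dist_eq] at hn
    exact hn
  have hcond3 : ∀ᶠ n : ℕ in atTop,
      ENNReal.ofReal ((N + 1 : ℝ) * (2 * d ^ 2 / (ε' ^ 2 * n))) ≤ δ := by
    have hreal : Tendsto (fun n : ℕ => (N + 1 : ℝ) * (2 * d ^ 2 / (ε' ^ 2 * n)))
        atTop (𝓝 0) := by
      have h1 : ∀ n : ℕ, (N + 1 : ℝ) * (2 * d ^ 2 / (ε' ^ 2 * n))
          = ((N + 1 : ℝ) * 2 * d ^ 2 / ε' ^ 2) / n := by intro n; ring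
      simp_rw [h1]
      exact tendsto_const_div_atTop_nhds_zero_nat _
    have h2 : Tendsto (fun n : ℕ =>
        ENNReal.ofReal ((N + 1 : ℝ) * (2 * d ^ 2 / (ε' ^ 2 * n)))) atTop (𝓝 0) := by
      rw [← ENNReal.ofReal_zero]
      exact (ENNReal.continuous_ofReal.tendsto 0).comp hreal
    exact ENNReal.tendsto_nhds_zero.1 h2 δ hδ
  filter_upwards [hcond1, hcond3, eventually_ge_atTop 1] with n hn1 hn3 hn0
  -- fixed n from now on
  have hn0' : (0 : ℝ) < n := by exact_mod_cast hn0
  set c : ℝ := (u n : ℝ) / n with hcdef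
  have hc0 : 0 ≤ c := by positivity
  have hcp : |c - p| ≤ min (ε' / (C + 1)) 1 := hn1
  have hc2 : c ≤ 2 := by
    have h1 := (abs_le.1 (hcp.trans (min_le_right _ _))).2
    linarith
  have hcC : |c - p| * C ≤ ε' := by
    have h1 : |c - p| ≤ ε' / (C + 1) := hcp.trans (min_le_left _ _)
    calc |c - p| * C ≤ (ε' / (C + 1)) * C :=
          mul_le_mul_of_nonneg_right h1 hC0
      _ ≤ ε' := by
          have h2 : (ε' / (C + 1)) * C * (C + 1) = ε' * C := by field_simp
          nlinarith [hε'.le, hC0]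
  have hun2 : (u n : ℝ) ≤ 2 * n := by
    rw [hcdef, div_le_iff₀ hn0'] at hc2
    linarith
  -- a.e. measurable modification
  have hTae : ∀ x : Fin (u n) × Fin d, AEMeasurable (T n x.1 x.2) μ := by
    intro x
    by_contra hcon
    have h0 := Measure.map_of_not_aemeasurable hcon
    rw [hdist n x.1 x.1.isLt x.2] at h0
    haveI : IsProbabilityMeasure (expMeasure 1) := isProbabilityMeasure_expMeasure one_pos
    exact IsProbabilityMeasure.ne_zero (expMeasure 1) h0
  set f : Fin (u n) × Fin d → Ω → ℝ := fun x => (hTae x).mk _ with hfdef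
  have hfmeas : ∀ x, Measurable (f x) := fun x => (hTae x).measurable_mk
  have hfae : ∀ x : Fin (u n) × Fin d, T n x.1 x.2 =ᵐ[μ] f x := fun x => (hTae x).ae_eq_mk
  have hfind : iIndepFun f μ := UGC.iIndepFun_ae_eq (hindep n) hfae
  have hfdist : ∀ x, μ.map (f x) = expMeasure 1 := by
    intro x
    rw [← Measure.map_congr (hfae x)]
    exact hdist n x.1 x.1.isLt x.2
  -- primed sup function
  set Sup' : Ω → ℝ := fun ω => ⨆ (t : ℝ) (_ : 0 ≤ t),
    |(∑ k : Fin (u n), UGC.Xv m f k t ω) / (n : ℝ) - p * UGC.hfun d m t| with hSup'def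
  have haeω : ∀ᵐ ω ∂μ, ∀ x : Fin (u n) × Fin d, T n x.1 x.2 ω = f x ω := by
    rw [ae_all_iff]
    exact fun x => hfae x
  have hsetae : {ω | ε ≤ dist ((fun (ω : Ω) => ⨆ (t : ℝ) (_ : 0 ≤ t),
        |(∑ k ∈ Finset.range (u n),
            (((Finset.univ.filter fun i : Fin d => t < T n k i ω).card : ℝ) *
              (if m ≤ (Finset.univ.filter fun i : Fin d => t < T n k i ω).card
                then 1 else 0))) / (n : ℝ)
          - p * ∑ ℓ ∈ Finset.Icc (max m 1) d, (ℓ : ℝ) * binomPMF d ℓ (Real.exp (-t))|) ω) 0}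
      =ᵐ[μ] {ω | ε ≤ dist (Sup' ω) 0} := by
    rw [Filter.eventuallyEq_set]
    filter_upwards [haeω] with ω hω
    have hbody : ∀ t : ℝ, (∑ k ∈ Finset.range (u n),
        (((Finset.univ.filter fun i : Fin d => t < T n k i ω).card : ℝ) *
          (if m ≤ (Finset.univ.filter fun i : Fin d => t < T n k i ω).card
            then 1 else 0))) = ∑ k : Fin (u n), UGC.Xv m f k t ω := by
      intro t
      rw [← Fin.sum_univ_eq_sum_range (fun k =>
        (((Finset.univ.filter fun i : Fin d => t < T n k i ω).card : ℝ) *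
          (if m ≤ (Finset.univ.filter fun i : Fin d => t < T n k i ω).card
            then 1 else 0))) (u n)]
      apply Finset.sum_congr rfl
      intro k _
      have hset : (Finset.univ.filter fun i : Fin d => t < T n (k : ℕ) i ω)
          = (Finset.univ.filter fun i : Fin d => t < f (k, i) ω) := by
        apply Finset.filter_congr
        intro i _
        rw [hω (k, i)]
      rw [hset]
      rfl
    have hsup : (⨆ (t : ℝ) (_ : 0 ≤ t),
        |(∑ k ∈ Finset.range (u n),
            (((Finset.univ.filter fun i : Fin d => t < T n k i ω).card : ℝ) *
              (if m ≤ (Finset.univ.filter fun i : Fin d => t < T n k i ω).card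
                then 1 else 0))) / (n : ℝ)
          - p * ∑ ℓ ∈ Finset.Icc (max m 1) d, (ℓ : ℝ) * binomPMF d ℓ (Real.exp (-t))|)
        = Sup' ω := by
      apply iSup_congr
      intro t
      apply iSup_congr
      intro _
      rw [hbody t]
      rfl
    rw [hsup]
  rw [measure_congr hsetae]
  -- event inclusion
  set Z : ℕ → Ω → ℝ := fun j ω => ∑ k : Fin (u n),
    (UGC.Xv m f k ((j : ℝ) * η) ω - UGC.hfun d m ((j : ℝ) * η)) with hZdef
  have hincl : {ω | ε ≤ dist (Sup' ω) 0} ⊆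
      ⋃ j ∈ Finset.range (N + 1), {ω | ε' * n ≤ |Z j ω|} := by
    intro ω hω
    by_contra hns
    have hgridZ : ∀ j : ℕ, j ≤ N → |Z j ω| < ε' * n := by
      intro j hj
      by_contra hge
      push_neg at hge
      exact hns (Set.mem_biUnion (Finset.mem_range.2 (by omega))
        (show ω ∈ {ω | ε' * n ≤ |Z j ω|} from hge))
    -- grid deviations
    set F : ℝ → ℝ := fun t => (∑ k : Fin (u n), UGC.Xv m f k t ω) / n with hFdef
    set G : ℝ → ℝ := UGC.hfun d m with hGdef
    have hFG : ∀ t : ℝ, F t - c * G t = (∑ k : Fin (u n),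
        (UGC.Xv m f k t ω - UGC.hfun d m t)) / n := by
      intro t
      rw [Finset.sum_sub_distrib, Finset.sum_const, Finset.card_univ, Fintype.card_fin,
        nsmul_eq_mul, sub_div, hcdef]
      simp only [F, G]
      ring
    have hgrid : ∀ j : ℕ, j ≤ N → |F ((j : ℝ) * η) - c * G ((j : ℝ) * η)| ≤ ε' := by
      intro j hj
      rw [hFG, abs_div, abs_of_pos hn0']
      rw [div_le_iff₀ hn0']
      have : |Z j ω| < ε' * n := hgridZ j hj
      calc |∑ k : Fin (u n), (UGC.Xv m f k ((j:ℝ) * η) ω - UGC.hfun d m ((j:ℝ) * η))|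
          = |Z j ω| := rfl
        _ ≤ ε' * n := this.le
    -- sandwich
    have hsand := UGC.sandwich (G := G) (F := F) (c := c) (L := L) (C := C) (ε' := ε')
      hc0 hc2
      (fun s t hst => by
        simp only [F]
        have hsum : ∑ k : Fin (u n), UGC.Xv m f k t ω ≤ ∑ k : Fin (u n), UGC.Xv m f k s ω :=
          Finset.sum_le_sum fun k _ => UGC.Xv_anti m k hst ω
        exact div_le_div_of_nonneg_right hsum hn0'.le)
      (fun t _ => by
        simp only [F]
        exact div_nonneg (Finset.sum_nonneg fun k _ => UGC.Xv_nonneg (f := f) m k t ω)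
          hn0'.le)
      (fun s t hs ht => UGC.hfun_lip d m hs ht)
      (fun t ht => UGC.hfun_tail d m ht)
      (fun t ht => UGC.hfun_nonneg d m ht)
      hL0 hC0 hε' hη hLη hN hgrid
    -- combine with |c − p| bound
    have hfinal : ∀ t : ℝ, 0 ≤ t →
        |F t - p * G t| ≤ 4 * ε' := by
      intro t ht
      have h1 := hsand t ht
      have h2 : |c - p| * G t ≤ ε' := by
        calc |c - p| * G t ≤ |c - p| * C :=
              mul_le_mul_of_nonneg_left (UGC.hfun_le_Con d m ht) (abs_nonneg _)
          _ ≤ ε' := hcC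
      have h3 : |(c - p) * G t| ≤ ε' := by
        rw [abs_mul, abs_of_nonneg (UGC.hfun_nonneg d m ht)]
        exact h2
      calc |F t - p * G t| = |(F t - c * G t) + (c - p) * G t| := by ring_nf
        _ ≤ |F t - c * G t| + |(c - p) * G t| := abs_add_le _ _
        _ ≤ 3 * ε' + ε' := add_le_add h1 h3
        _ = 4 * ε' := by ring
    have hbound := UGC.sup_abs_le (F := fun t : ℝ => F t - p * G t)
      (a := 4 * ε') (by positivity) hfinal
    have : dist (Sup' ω) 0 ≤ 4 * ε' := hbound
    rw [Set.mem_setOf_eq] at hω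
    have h5 : ε = 5 * ε' := by rw [hε'def]; ring
    linarith
  -- measure bound
  calc μ {ω | ε ≤ dist (Sup' ω) 0}
      ≤ μ (⋃ j ∈ Finset.range (N + 1), {ω | ε' * n ≤ |Z j ω|}) := measure_mono hincl
    _ ≤ ∑ j ∈ Finset.range (N + 1), μ {ω | ε' * n ≤ |Z j ω|} :=
        measure_biUnion_finset_le _ _
    _ ≤ ∑ _j ∈ Finset.range (N + 1), ENNReal.ofReal (2 * d ^ 2 / (ε' ^ 2 * n)) := by
        apply Finset.sum_le_sum
        intro j _
        have hjη : (0 : ℝ) ≤ (j : ℝ) * η := by positivity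
        have hεn : 0 < ε' * n := by positivity
        calc μ {ω | ε' * n ≤ |Z j ω|}
            ≤ ENNReal.ofReal ((u n : ℝ) * d ^ 2 / (ε' * n) ^ 2) :=
              UGC.cheb hfmeas hfind hfdist m hmd hjη hεn
          _ ≤ ENNReal.ofReal (2 * d ^ 2 / (ε' ^ 2 * n)) := by
              apply ENNReal.ofReal_le_ofReal
              rw [div_le_div_iff₀ (by positivity) (by positivity)]
              have hd2 : (0:ℝ) ≤ (d:ℝ) ^ 2 := by positivity
              calc (u n : ℝ) * d ^ 2 * (ε' ^ 2 * n)
                  ≤ (2 * n) * d ^ 2 * (ε' ^ 2 * n) := by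
                    apply mul_le_mul_of_nonneg_right _ (by positivity)
                    exact mul_le_mul_of_nonneg_right hun2 hd2
                _ = 2 * d ^ 2 * (ε' * n) ^ 2 := by ring
    _ = ENNReal.ofReal ((N + 1 : ℝ) * (2 * d ^ 2 / (ε' ^ 2 * n))) := by
        rw [Finset.sum_const, Finset.card_range, nsmul_eq_mul]
        rw [← ENNReal.ofReal_natCast (N + 1), ← ENNReal.ofReal_mul (by positivity)]
        push_cast
        ring_nf
    _ ≤ δ := hn3
end
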